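/- arXiv:1709.06068 — 7 statements merged into one kernel-verified Lean document; each statement's English description precedes it below -/
import Mathlib

section
/- Let S be a nondegenerate simplex in R^n contained in Q_n = [0,1]^n with Q_n ⊄ S. Then ξ(S) = (n+1)·max_{1≤k≤n+1} max_{v ∈ ver(Q_n)} (−λ_k(v)) + 1, where λ_k are the basic Lagrange polynomials of S and ver(Q_n) = {0,1}^n. -/
open Finset MeasureTheory

/-- The unit cube `[0,1]^n` in `ℝ^n`. -/
def unitCube (n : ℕ) : Set (Fin n → ℝ) := {x | ∀ i, 0 ≤ x i ∧ x i ≤ 1}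

/-- The set of vertices of the unit cube, i.e. `{0,1}^n`. -/
def cubeVerts (n : ℕ) : Set (Fin n → ℝ) := {x | ∀ i, x i = 0 ∨ x i = 1}

/-- The (solid) simplex spanned by `n+1` points. -/
def simplexSet {n : ℕ} (v : Fin (n + 1) → (Fin n → ℝ)) : Set (Fin n → ℝ) :=
  convexHull ℝ (Set.range v)

/-- The centroid (center of gravity) of the simplex with vertices `v`. -/
noncomputable def simplexCentroid {n : ℕ} (v : Fin (n + 1) → (Fin n → ℝ)) : Fin n → ℝ :=
  ((n : ℝ) + 1)⁻¹ • ∑ j, v j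

/-- The homothety of the simplex with vertices `v`, with center the centroid and ratio `σ`. -/
noncomputable def homSimplex {n : ℕ} (v : Fin (n + 1) → (Fin n → ℝ)) (σ : ℝ) : Set (Fin n → ℝ) :=
  (fun x => simplexCentroid v + σ • (x - simplexCentroid v)) '' simplexSet v

/-- `ξ(S) = min {σ ≥ 1 : Q_n ⊆ σS}`. -/
noncomputable def xiVal {n : ℕ} (v : Fin (n + 1) → (Fin n → ℝ)) : ℝ :=
  sInf {σ : ℝ | 1 ≤ σ ∧ unitCube n ⊆ homSimplex v σ}

/-- A function `ℝ^n → ℝ` is an affine polynomial of degree at most 1. -/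
def IsAffinePoly {n : ℕ} (f : (Fin n → ℝ) → ℝ) : Prop :=
  ∃ a : Fin n → ℝ, ∃ b : ℝ, ∀ x, f x = ∑ i, a i * x i + b

/-- `lam` is the family of basic Lagrange polynomials of the simplex with vertices `v`. -/
def IsLagrangeBasis {n : ℕ} (v : Fin (n + 1) → (Fin n → ℝ))
    (lam : Fin (n + 1) → (Fin n → ℝ) → ℝ) : Prop :=
  (∀ j, IsAffinePoly (lam j)) ∧ ∀ j k, lam j (v k) = if j = k then 1 else 0

/-- The `i`-th axial diameter of a set `S ⊆ ℝ^n`: the supremum of lengths of segments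
in `S` parallel to the `i`-th coordinate axis. -/
noncomputable def axialDiam {n : ℕ} (S : Set (Fin n → ℝ)) (i : Fin n) : ℝ :=
  sSup {t : ℝ | ∃ x ∈ S, ∃ y ∈ S, (∀ k, k ≠ i → x k = y k) ∧ y i - x i = t}

-- affine poly respects affine combinations
lemma affinePoly_comb {n m : ℕ} {f : (Fin n → ℝ) → ℝ} (hf : IsAffinePoly f)
    (w : Fin m → ℝ) (p : Fin m → (Fin n → ℝ)) (hw : ∑ j, w j = 1) :
    f (∑ j, w j • p j) = ∑ j, w j * f (p j) := by
  obtain ⟨a, b, hab⟩ := hf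
  have h1 : f (∑ j, w j • p j) = ∑ i, a i * (∑ j, w j * p j i) + b := by
    rw [hab]; congr 1; apply Finset.sum_congr rfl; intro i _
    congr 1
    simp [Finset.sum_apply]
  rw [h1]
  have h2 : ∀ j, w j * f (p j) = (∑ i, w j * (a i * p j i)) + w j * b := by
    intro j; rw [hab, mul_add, Finset.mul_sum]
  simp only [h2]
  rw [Finset.sum_add_distrib, ← Finset.sum_mul, hw, one_mul]
  congr 1
  rw [Finset.sum_comm]
  apply Finset.sum_congr rfl; intro i _
  rw [Finset.mul_sum]
  apply Finset.sum_congr rfl; intro j _; ring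

noncomputable def simpBasis {n : ℕ} (v : Fin (n + 1) → (Fin n → ℝ))
    (hv : AffineIndependent ℝ v) : AffineBasis (Fin (n+1)) ℝ (Fin n → ℝ) :=
  ⟨v, hv, by
    rw [hv.affineSpan_eq_top_iff_card_eq_finrank_add_one]
    simp [Module.finrank_fin_fun]⟩

lemma lam_eq_coord {n : ℕ} (v : Fin (n + 1) → (Fin n → ℝ)) (hv : AffineIndependent ℝ v)
    (lam : Fin (n + 1) → (Fin n → ℝ) → ℝ)
    (ha : ∀ j, IsAffinePoly (lam j)) (hd : ∀ j k, lam j (v k) = if j = k then 1 else 0)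
    (k : Fin (n+1)) (x : Fin n → ℝ) : lam k x = (simpBasis v hv).coord k x := by
  set b := simpBasis v hv
  have hx : x = ∑ j, b.coord j x • v j := by
    have := b.affineCombination_coord_eq_self x
    rw [Finset.univ.affineCombination_eq_linear_combination _ _ (b.sum_coord_apply_eq_one x)]
      at this
    exact this.symm
  conv_lhs => rw [hx]
  rw [affinePoly_comb (ha k) _ _ (b.sum_coord_apply_eq_one x)]
  simp [hd, mul_ite, mul_one, mul_zero, Finset.sum_ite_eq]

lemma mem_simplexSet_iff {n : ℕ} (v : Fin (n + 1) → (Fin n → ℝ)) (hv : AffineIndependent ℝ v)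
    (lam : Fin (n + 1) → (Fin n → ℝ) → ℝ)
    (ha : ∀ j, IsAffinePoly (lam j)) (hd : ∀ j k, lam j (v k) = if j = k then 1 else 0)
    (x : Fin n → ℝ) : x ∈ simplexSet v ↔ ∀ k, 0 ≤ lam k x := by
  have hr : Set.range (⇑(simpBasis v hv)) = Set.range v := rfl
  have := (simpBasis v hv).convexHull_eq_nonneg_coord
  rw [hr] at this
  rw [simplexSet, this]
  simp only [Set.mem_setOf_eq]
  constructor
  · intro h k; rw [lam_eq_coord v hv lam ha hd]; exact h k
  · intro h k; rw [← lam_eq_coord v hv lam ha hd]; exact h k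

lemma affinePoly_homothety {n : ℕ} {f : (Fin n → ℝ) → ℝ} (hf : IsAffinePoly f)
    (c x : Fin n → ℝ) (σ : ℝ) : f (c + σ • (x - c)) = σ * f x + (1 - σ) * f c := by
  obtain ⟨a, b, hab⟩ := hf
  have h : ∀ i, a i * (c i + σ * (x i - c i)) = σ * (a i * x i) + (1 - σ) * (a i * c i) := by
    intro i; ring
  calc f (c + σ • (x - c)) = ∑ i, a i * (c i + σ * (x i - c i)) + b := by
        rw [hab]; congr 1
      _ = (∑ i, (σ * (a i * x i) + (1 - σ) * (a i * c i))) + b := by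
        rw [Finset.sum_congr rfl fun i _ => h i]
      _ = σ * (∑ i, a i * x i + b) + (1 - σ) * (∑ i, a i * c i + b) := by
        rw [Finset.sum_add_distrib, ← Finset.mul_sum, ← Finset.mul_sum]; ring
      _ = σ * f x + (1 - σ) * f c := by rw [hab, hab]

lemma lam_centroid {n : ℕ} (v : Fin (n + 1) → (Fin n → ℝ))
    {lam : Fin (n + 1) → (Fin n → ℝ) → ℝ} (k : Fin (n+1))
    (ha : IsAffinePoly (lam k)) (hd : ∀ j, lam k (v j) = if k = j then 1 else 0) :
    lam k (simplexCentroid v) = ((n : ℝ) + 1)⁻¹ := by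
  have hn : ((n : ℝ) + 1) ≠ 0 := by positivity
  have hc : simplexCentroid v = ∑ j, ((n : ℝ) + 1)⁻¹ • v j := by
    rw [simplexCentroid, Finset.smul_sum]
  have hw : ∑ _j : Fin (n+1), ((n : ℝ) + 1)⁻¹ = 1 := by
    rw [Finset.sum_const, Finset.card_univ, Fintype.card_fin, nsmul_eq_mul]
    push_cast
    field_simp
  rw [hc, affinePoly_comb ha _ _ hw, ← Finset.mul_sum]
  simp [hd, Finset.sum_ite_eq]

lemma mem_homSimplex_iff {n : ℕ} (v : Fin (n + 1) → (Fin n → ℝ)) (hv : AffineIndependent ℝ v)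
    (lam : Fin (n + 1) → (Fin n → ℝ) → ℝ)
    (ha : ∀ j, IsAffinePoly (lam j)) (hd : ∀ j k, lam j (v k) = if j = k then 1 else 0)
    {σ : ℝ} (hσ : 0 < σ) (y : Fin n → ℝ) :
    y ∈ homSimplex v σ ↔ ∀ k, (1 - σ) / ((n : ℝ) + 1) ≤ lam k y := by
  have hn : (0:ℝ) < (n : ℝ) + 1 := by positivity
  have hcen : ∀ k, lam k (simplexCentroid v) = ((n : ℝ) + 1)⁻¹ :=
    fun k => lam_centroid v k (ha k) (fun j => hd k j)
  constructor
  · rintro ⟨x, hx, rfl⟩ k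
    rw [affinePoly_homothety (ha k), hcen]
    have h0 : 0 ≤ lam k x := (mem_simplexSet_iff v hv lam ha hd x).1 hx k
    have : (1 - σ) / ((n : ℝ) + 1) = (1 - σ) * ((n : ℝ) + 1)⁻¹ := by ring
    rw [this]
    nlinarith
  · intro h
    refine ⟨simplexCentroid v + σ⁻¹ • (y - simplexCentroid v), ?_, ?_⟩
    · rw [mem_simplexSet_iff v hv lam ha hd]
      intro k
      rw [affinePoly_homothety (ha k), hcen]
      have h1 : σ⁻¹ * ((1 - σ) / ((n : ℝ) + 1)) ≤ σ⁻¹ * lam k y :=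
        mul_le_mul_of_nonneg_left (h k) (by positivity)
      have key : σ⁻¹ * ((1 - σ) / ((n : ℝ) + 1)) + (1 - σ⁻¹) * ((n : ℝ) + 1)⁻¹ = 0 := by
        field_simp
        ring
      linarith
    · show simplexCentroid v + σ • (simplexCentroid v + σ⁻¹ • (y - simplexCentroid v)
          - simplexCentroid v) = y
      rw [add_sub_cancel_left, smul_smul, mul_inv_cancel₀ hσ.ne', one_smul]
      abel

lemma cubeVerts_subset_unitCube {n : ℕ} : cubeVerts n ⊆ unitCube n := by
  intro x hx i
  rcases hx i with h | h <;> simp [h]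

lemma min_at_vertex {n : ℕ} {f : (Fin n → ℝ) → ℝ} (hf : IsAffinePoly f)
    {x : Fin n → ℝ} (hx : x ∈ unitCube n) : ∃ y ∈ cubeVerts n, f y ≤ f x := by
  obtain ⟨a, b, hab⟩ := hf
  refine ⟨fun i => if a i < 0 then 1 else 0, fun i => by by_cases h : a i < 0 <;> simp [h], ?_⟩
  rw [hab, hab]
  apply (add_le_add_iff_right b).2
  apply Finset.sum_le_sum
  intro i _
  have h1 := (hx i).1
  have h2 := (hx i).2
  by_cases h : a i < 0 <;> simp only [h, if_true, if_false] <;> nlinarith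

/-- if `S ⊆ Q_n` and `Q_n ⊄ S`, then
`ξ(S) = (n+1)·max_{k} max_{v ∈ ver(Q_n)} (−λ_k(v)) + 1`. -/
theorem xi_formula {n : ℕ} (v : Fin (n + 1) → (Fin n → ℝ))
    (hv : AffineIndependent ℝ v)
    (lam : Fin (n + 1) → (Fin n → ℝ) → ℝ) (hlam : IsLagrangeBasis v lam)
    (hS : simplexSet v ⊆ unitCube n) (hns : ¬ unitCube n ⊆ simplexSet v) :
    xiVal v =
      ((n : ℝ) + 1) * sSup {r : ℝ | ∃ k, ∃ x ∈ cubeVerts n, r = -lam k x} + 1 := by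
  obtain ⟨ha, hd⟩ := hlam
  have hn : (0:ℝ) < (n : ℝ) + 1 := by positivity
  set U : Set ℝ := {r : ℝ | ∃ k, ∃ x ∈ cubeVerts n, r = -lam k x} with hU
  set M : ℝ := sSup U with hM
  -- U is nonempty
  have hUne : U.Nonempty := by
    refine ⟨-lam 0 (fun _ => 0), 0, fun _ => 0, fun i => Or.inl rfl, rfl⟩
  -- U is finite, hence bounded above
  have hcvFin : (cubeVerts n).Finite := by
    have hsub : cubeVerts n ⊆ Set.pi Set.univ (fun _ => ({0, 1} : Set ℝ)) := by
      intro x hx i _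
      rcases hx i with h | h <;> simp [h]
    exact (Set.Finite.pi (fun _ => (Set.finite_singleton (1:ℝ)).insert 0)).subset hsub
  have hUFin : U.Finite := by
    have hsub : U ⊆ (fun p : Fin (n+1) × (Fin n → ℝ) => -lam p.1 p.2) ''
        (Set.univ ×ˢ cubeVerts n) := by
      rintro r ⟨k, x, hx, rfl⟩
      exact ⟨(k, x), ⟨trivial, hx⟩, rfl⟩
    exact ((Set.finite_univ.prod hcvFin).image _).subset hsub
  have hUbdd : BddAbove U := hUFin.bddAbove
  -- M > 0
  have hMpos : 0 < M := by
    obtain ⟨x, hxQ, hxS⟩ := Set.not_subset.1 hns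
    rw [mem_simplexSet_iff v hv lam ha hd] at hxS
    push_neg at hxS
    obtain ⟨k, hk⟩ := hxS
    obtain ⟨y, hy, hyx⟩ := min_at_vertex (ha k) hxQ
    have hmem : -lam k y ∈ U := ⟨k, y, hy, rfl⟩
    have := le_csSup hUbdd hmem
    linarith
  set σ₀ : ℝ := ((n : ℝ) + 1) * M + 1 with hσ₀
  have hσ₀1 : 1 ≤ σ₀ := by nlinarith
  have hσ₀pos : 0 < σ₀ := by linarith
  -- σ₀ is in the defining set
  have hmemT : σ₀ ∈ {σ : ℝ | 1 ≤ σ ∧ unitCube n ⊆ homSimplex v σ} := by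
    refine ⟨hσ₀1, ?_⟩
    intro x hx
    rw [mem_homSimplex_iff v hv lam ha hd hσ₀pos]
    intro k
    have hval : (1 - σ₀) / ((n : ℝ) + 1) = -M := by
      rw [hσ₀]; field_simp; ring
    rw [hval]
    obtain ⟨y, hy, hyx⟩ := min_at_vertex (ha k) hx
    have : -lam k y ≤ M := le_csSup hUbdd ⟨k, y, hy, rfl⟩
    linarith
  -- σ₀ is a lower bound
  have hlb : ∀ σ ∈ {σ : ℝ | 1 ≤ σ ∧ unitCube n ⊆ homSimplex v σ}, σ₀ ≤ σ := by
    rintro σ ⟨hσ1, hsub⟩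
    have hσpos : (0:ℝ) < σ := by linarith
    have hMle : M ≤ (σ - 1) / ((n : ℝ) + 1) := by
      apply csSup_le hUne
      rintro r ⟨k, x, hx, rfl⟩
      have hxQ : x ∈ unitCube n := cubeVerts_subset_unitCube hx
      have := (mem_homSimplex_iff v hv lam ha hd hσpos x).1 (hsub hxQ) k
      rw [le_div_iff₀ hn]
      rw [div_le_iff₀ hn] at this
      linarith
    rw [le_div_iff₀ hn] at hMle
    rw [hσ₀]
    nlinarith
  have hbdd : BddBelow {σ : ℝ | 1 ≤ σ ∧ unitCube n ⊆ homSimplex v σ} :=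
    ⟨1, fun σ hσ => hσ.1⟩
  rw [xiVal]
  exact le_antisymm (csInf_le hbdd hmemT) (le_csInf ⟨σ₀, hmemT⟩ hlb)
end

section
/- Let Q be a nondegenerate parallelotope and S a nondegenerate simplex in R^n with S ⊆ Q ⊆ nS (nS the homothety of S about its centroid with ratio n). Then the centroid of S coincides with the center of Q. -/
open Finset MeasureTheory

/-- if `S ⊆ Q ⊆ nS` for a nondegenerate parallelotope `Q` (affine image of the
unit cube), then the centroid of `S` coincides with the center of `Q`. -/
theorem centroid_eq_center {n : ℕ} (v : Fin (n + 1) → (Fin n → ℝ))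
    (hv : AffineIndependent ℝ v)
    (f : (Fin n → ℝ) ≃ᵃ[ℝ] (Fin n → ℝ))
    (hSQ : simplexSet v ⊆ f '' unitCube n)
    (hQS : f '' unitCube n ⊆ homSimplex v n) :
    simplexCentroid v = f (fun _ => (1 : ℝ) / 2) := by
  have hN : ((n : ℝ) + 1) ≠ 0 := by positivity
  have hcard : Fintype.card (Fin (n + 1)) = Module.finrank ℝ (Fin n → ℝ) + 1 := by
    simp [Module.finrank_fin_fun]
  have htot : affineSpan ℝ (Set.range v) = ⊤ :=
    hv.affineSpan_eq_top_iff_card_eq_finrank_add_one.mpr hcard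
  let b : AffineBasis (Fin (n + 1)) ℝ (Fin n → ℝ) := ⟨v, hv, htot⟩
  have hbv : ⇑b = v := rfl
  -- weights for the centroid
  have hw1 : ∑ _j : Fin (n + 1), ((n : ℝ) + 1)⁻¹ = 1 := by
    rw [Finset.sum_const, Finset.card_univ, Fintype.card_fin, nsmul_eq_mul]
    push_cast
    field_simp
  have hcentC : simplexCentroid v
      = Finset.univ.affineCombination ℝ v (fun _ => ((n : ℝ) + 1)⁻¹) := by
    rw [Finset.univ.affineCombination_eq_linear_combination v _ hw1]
    rw [simplexCentroid, Finset.smul_sum]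
  have hcoordC : ∀ j, b.coord j (simplexCentroid v) = ((n : ℝ) + 1)⁻¹ := by
    intro j
    rw [hcentC, ← hbv]
    exact b.coord_apply_combination_of_mem (Finset.mem_univ j) hw1
  -- coordinates of points of the simplex are nonnegative
  have hSnn : ∀ x ∈ simplexSet v, ∀ j, 0 ≤ b.coord j x := by
    intro x hx j
    have : x ∈ convexHull ℝ (Set.range ⇑b) := by rwa [hbv]
    rw [b.convexHull_eq_nonneg_coord] at this
    exact this j
  -- lower bound for coordinates of points of n • S
  have hQlb : ∀ y ∈ homSimplex v n, ∀ j,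
      (1 - (n : ℝ)) * ((n : ℝ) + 1)⁻¹ ≤ b.coord j y := by
    rintro y ⟨x, hx, rfl⟩ j
    have key : b.coord j (simplexCentroid v + (n : ℝ) • (x - simplexCentroid v))
        = b.coord j (simplexCentroid v) + (n : ℝ) * (b.coord j x - b.coord j (simplexCentroid v)) := by
      have h1 : simplexCentroid v + (n : ℝ) • (x - simplexCentroid v)
          = ((n : ℝ) • (x - simplexCentroid v)) +ᵥ simplexCentroid v := by
        simp [vadd_eq_add, add_comm]
      rw [h1, AffineMap.map_vadd, (b.coord j).linear.map_smul]
      have h2 : (b.coord j).linear (x - simplexCentroid v)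
          = b.coord j x - b.coord j (simplexCentroid v) := by
        have := (b.coord j).linearMap_vsub x (simplexCentroid v)
        simpa [vsub_eq_sub] using this
      rw [h2]
      simp [vadd_eq_add, smul_eq_mul, add_comm]
    rw [key, hcoordC]
    have hx0 : 0 ≤ b.coord j x := hSnn x hx j
    have hn0 : (0 : ℝ) ≤ n := Nat.cast_nonneg n
    have hinv : (0 : ℝ) ≤ ((n : ℝ) + 1)⁻¹ := by positivity
    nlinarith [mul_nonneg hn0 hx0]
  -- main bound : coordinates of the center of Q
  have hge : ∀ j, ((n : ℝ) + 1)⁻¹ ≤ b.coord j (f (fun _ => (1 : ℝ) / 2)) := by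
    intro j
    -- v j ∈ Q
    obtain ⟨x, hxQ, hxv⟩ := hSQ (subset_convexHull ℝ _ ⟨j, rfl⟩)
    set y : Fin n → ℝ := fun i => 1 - x i with hy
    have hyQ : y ∈ unitCube n := by
      intro i
      obtain ⟨h0, h1⟩ := hxQ i
      constructor <;> simp [hy] <;> linarith
    have hmid : (fun _ => (1 : ℝ) / 2) = midpoint ℝ x y := by
      funext i
      have hpt : midpoint ℝ x y i = midpoint ℝ (x i) (y i) := rfl
      rw [hpt, midpoint_eq_smul_add]
      simp [hy]
      try ring
    have hfy := hQS ⟨y, hyQ, rfl⟩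
    have hylb := hQlb _ hfy j
    have hcv : b.coord j (v j) = 1 := by
      have := b.coord_apply_eq j
      rwa [hbv] at this
    have : b.coord j (f (fun _ => (1 : ℝ) / 2))
        = midpoint ℝ (b.coord j (f x)) (b.coord j (f y)) := by
      rw [hmid, AffineEquiv.map_midpoint, AffineMap.map_midpoint]
    rw [this, hxv, hcv]
    rw [midpoint_eq_smul_add]
    have h2 : (⅟ 2 : ℝ) = 1 / 2 := by norm_num
    rw [h2, smul_eq_mul]
    have hn0 : (0 : ℝ) < (n : ℝ) + 1 := by positivity
    have h3 : (1 - (n : ℝ)) ≤ b.coord j (f y) * ((n : ℝ) + 1) := by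
      have := mul_le_mul_of_nonneg_right hylb (le_of_lt hn0)
      rwa [mul_assoc, inv_mul_cancel₀ hN, mul_one] at this
    rw [inv_eq_one_div, div_le_iff₀ hn0]
    nlinarith
  -- sum of coordinates is 1
  have hsum : ∑ j, b.coord j (f (fun _ => (1 : ℝ) / 2)) = 1 :=
    b.sum_coord_apply_eq_one _
  -- equality of coordinates
  have heq : ∀ j, b.coord j (f (fun _ => (1 : ℝ) / 2)) = ((n : ℝ) + 1)⁻¹ := by
    have hzero : ∑ j, (b.coord j (f (fun _ => (1 : ℝ) / 2)) - ((n : ℝ) + 1)⁻¹) = 0 := by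
      rw [Finset.sum_sub_distrib, hsum, hw1, sub_self]
    intro j
    have := (Finset.sum_eq_zero_iff_of_nonneg
      (fun k _ => sub_nonneg.mpr (hge k))).mp hzero j (Finset.mem_univ j)
    linarith [sub_eq_zero.mp this]
  exact b.ext_elem fun j => by rw [hcoordC j, heq j]
end

section
/- Suppose S ⊆ [−1,1]^n ⊆ nS for a nondegenerate simplex S in R^n (nS the homothety of S about its centroid with ratio n). Then for each j, λ_j(0) = 1/(n+1) and max over the cube [−1,1]^n of λ_j equals 1; in particular [−1,1]^n ⊆ {x : λ_j(x) ≤ 1} for all j. -/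
open Finset MeasureTheory

/-- The cube `[-1,1]^n`. -/
def symCube (n : ℕ) : Set (Fin n → ℝ) := {x | ∀ i, -1 ≤ x i ∧ x i ≤ 1}


theorem lagrange_at_zero_and_max' {n : ℕ} (v : Fin (n + 1) → (Fin n → ℝ))
    (hv : AffineIndependent ℝ v)
    (lam : Fin (n + 1) → (Fin n → ℝ) → ℝ)
    (hlam : (∀ j, ∃ a : Fin n → ℝ, ∃ b : ℝ, ∀ x, lam j x = ∑ i, a i * x i + b) ∧
      ∀ j k, lam j (v k) = if j = k then 1 else 0)
    (hS : convexHull ℝ (Set.range v) ⊆ {x : Fin n → ℝ | ∀ i, -1 ≤ x i ∧ x i ≤ 1})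
    (hQ : {x : Fin n → ℝ | ∀ i, -1 ≤ x i ∧ x i ≤ 1} ⊆
      (fun x => (((n : ℝ) + 1)⁻¹ • ∑ j, v j) + (n : ℝ) • (x - (((n : ℝ) + 1)⁻¹ • ∑ j, v j))) ''
        convexHull ℝ (Set.range v)) :
    ∀ j, lam j 0 = 1 / ((n : ℝ) + 1) ∧
      IsGreatest (lam j '' {x : Fin n → ℝ | ∀ i, -1 ≤ x i ∧ x i ≤ 1}) 1 := by
  obtain ⟨haff, hdual⟩ := hlam
  choose a b hab using haff
  set t : ℝ := ((n : ℝ) + 1)⁻¹ with ht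
  set c : Fin n → ℝ := t • ∑ j, v j with hc
  have hn1 : (0:ℝ) < (n:ℝ) + 1 := by positivity
  have htn : t * ((n:ℝ)+1) = 1 := inv_mul_cancel₀ hn1.ne'
  -- general affine-combination identity
  have key : ∀ (j : Fin (n+1)) (m : ℕ) (w : Fin m → ℝ) (p : Fin m → Fin n → ℝ),
      ∑ k, w k = 1 → lam j (∑ k, w k • p k) = ∑ k, w k * lam j (p k) := by
    intro j m w p hw
    have L : lam j (∑ k, w k • p k) = (∑ k, ∑ i, w k * (a j i * p k i)) + b j := by
      rw [hab]
      congr 1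
      rw [Finset.sum_comm]
      refine Finset.sum_congr rfl fun i _ => ?_
      rw [Finset.sum_apply]
      simp only [Pi.smul_apply, smul_eq_mul]
      rw [Finset.mul_sum]
      exact Finset.sum_congr rfl fun k _ => by ring
    have R : ∑ k, w k * lam j (p k) = (∑ k, ∑ i, w k * (a j i * p k i)) + b j := by
      have h2 : ∀ k ∈ (univ : Finset (Fin m)),
          w k * lam j (p k) = (∑ i, w k * (a j i * p k i)) + w k * b j := by
        intro k _
        rw [hab, mul_add, Finset.mul_sum]
      rw [Finset.sum_congr rfl h2, Finset.sum_add_distrib, ← Finset.sum_mul, hw, one_mul]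
    rw [L, R]
  -- two-point affine identity
  have key2 : ∀ (j : Fin (n+1)) (α β : ℝ) (x y : Fin n → ℝ), α + β = 1 →
      lam j (α • x + β • y) = α * lam j x + β * lam j y := by
    intro j α β x y hαβ
    have := key j 2 ![α, β] ![x, y] (by simp [Fin.sum_univ_two, hαβ])
    simpa [Fin.sum_univ_two] using this
  -- lam j at the centroid
  have hcent : ∀ j, lam j c = t := by
    intro j
    have hc' : c = ∑ k, (fun _ : Fin (n+1) => t) k • v k := by
      rw [hc, Finset.smul_sum]
    have hw : ∑ _k : Fin (n+1), t = 1 := by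
      rw [Finset.sum_const, card_univ, Fintype.card_fin, nsmul_eq_mul]
      push_cast
      linarith [htn]
    have := key j (n+1) (fun _ => t) v hw
    rw [← hc'] at this
    rw [this]
    have : ∀ k ∈ (univ : Finset (Fin (n+1))), t * lam j (v k) = t * (if j = k then 1 else 0) := by
      intro k _; rw [hdual]
    rw [Finset.sum_congr rfl this]
    simp
  -- negation identity
  have hneg : ∀ (j : Fin (n+1)) (x : Fin n → ℝ), lam j (-x) = 2 * lam j 0 - lam j x := by
    intro j x
    have h := key2 j 2 (-1) 0 x (by ring)
    have : (2:ℝ) • (0 : Fin n → ℝ) + (-1:ℝ) • x = -x := by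
      ext i; simp
    rw [this] at h
    rw [h]; ring
  -- values on the simplex are in [0,1]
  have hbound : ∀ j, ∀ x ∈ convexHull ℝ (Set.range v), 0 ≤ lam j x ∧ lam j x ≤ 1 := by
    intro j
    have hconv : Convex ℝ {x : Fin n → ℝ | 0 ≤ lam j x ∧ lam j x ≤ 1} := by
      intro x hx y hy α β hα hβ hαβ
      have := key2 j α β x y hαβ
      constructor
      · rw [this]; nlinarith [hx.1, hx.2, hy.1, hy.2]
      · rw [this]; nlinarith [hx.1, hx.2, hy.1, hy.2]
    have hrange : Set.range v ⊆ {x : Fin n → ℝ | 0 ≤ lam j x ∧ lam j x ≤ 1} := by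
      rintro _ ⟨k, rfl⟩
      rw [Set.mem_setOf_eq, hdual]
      split_ifs <;> norm_num
    exact fun x hx => convexHull_min hrange hconv hx
  -- values on nS are ≥ t - n*t
  have hlow : ∀ (j : Fin (n+1)) (y : Fin n → ℝ),
      y ∈ ((fun x => c + (n : ℝ) • (x - c)) '' convexHull ℝ (Set.range v)) →
      t - (n:ℝ) * t ≤ lam j y := by
    rintro j _ ⟨x, hx, rfl⟩
    dsimp only
    have hrw : c + (n:ℝ) • (x - c) = (1 - (n:ℝ)) • c + (n:ℝ) • x := by
      ext i; simp; ring
    rw [hrw, key2 j (1 - (n:ℝ)) (n:ℝ) c x (by ring), hcent]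
    have h0 := (hbound j x hx).1
    nlinarith [Nat.cast_nonneg (α := ℝ) n]
  -- sum of lambdas is identically 1
  have hsum : ∀ x, ∑ j, lam j x = 1 := by
    set A : Fin n → ℝ := fun i => ∑ j, a j i with hA
    let L : (Fin n → ℝ) →ₗ[ℝ] ℝ :=
      { toFun := fun x => ∑ i, A i * x i
        map_add' := by intro x y; simp [mul_add, Finset.sum_add_distrib]
        map_smul' := by
          intro r x
          simp only [Pi.smul_apply, smul_eq_mul, RingHom.id_apply]
          rw [Finset.mul_sum]
          exact Finset.sum_congr rfl fun i _ => by ring }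
    have hLlam : ∀ x, ∑ j, lam j x = L x + ∑ j, b j := by
      intro x
      calc ∑ j, lam j x = ∑ j, ((∑ i, a j i * x i) + b j) := by
            exact Finset.sum_congr rfl fun j _ => hab j x
        _ = (∑ j, ∑ i, a j i * x i) + ∑ j, b j := Finset.sum_add_distrib
        _ = (∑ i, ∑ j, a j i * x i) + ∑ j, b j := by rw [Finset.sum_comm]
        _ = L x + ∑ j, b j := by
            congr 1
            exact Finset.sum_congr rfl fun i _ => (Finset.sum_mul ..).symm
    have hdsum : ∀ k, ∑ j, lam j (v k) = 1 := by
      intro k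
      have : ∀ j ∈ (univ : Finset (Fin (n+1))),
          lam j (v k) = if j = k then (1:ℝ) else 0 := fun j _ => hdual j k
      rw [Finset.sum_congr rfl this]
      simp
    have hLv : ∀ k, L (v k) + ∑ j, b j = 1 := fun k => by rw [← hLlam, hdsum]
    have hli := (affineIndependent_iff_linearIndependent_vsub ℝ v 0).mp hv
    have hcard : Fintype.card {k : Fin (n+1) // k ≠ 0} = Module.finrank ℝ (Fin n → ℝ) := by
      simp [Fintype.card_subtype_compl]
    have hL0 : L = 0 := by
      rcases Nat.eq_zero_or_pos n with hn | hn
      · apply LinearMap.ext; intro x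
        subst hn
        simp [L]
      · haveI : Nonempty {k : Fin (n+1) // k ≠ 0} :=
          ⟨⟨⟨1, Nat.succ_lt_succ hn⟩, fun h => by simpa using congrArg Fin.val h⟩⟩
        let Bas := basisOfLinearIndependentOfCardEqFinrank hli hcard
        have hBas : ∀ k : {k : Fin (n+1) // k ≠ 0}, Bas k = v k.1 -ᵥ v 0 := fun k =>
          congrFun (coe_basisOfLinearIndependentOfCardEqFinrank hli hcard) k
        apply Bas.ext
        intro k
        rw [hBas k]
        have hmap : L (v k.1 -ᵥ v 0) = L (v k.1) - L (v 0) := by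
          rw [vsub_eq_sub, map_sub]
        rw [hmap]
        have h1 := hLv k.1
        have h2 := hLv 0
        simp only [LinearMap.zero_apply]
        linarith
    intro x
    rw [hLlam, hL0]
    simp only [LinearMap.zero_apply, zero_add]
    have := hLv 0
    rw [hL0] at this
    simpa using this
  -- membership facts
  have hvj : ∀ j, v j ∈ {x : Fin n → ℝ | ∀ i, -1 ≤ x i ∧ x i ≤ 1} :=
    fun j => hS (subset_convexHull ℝ _ ⟨j, rfl⟩)
  have hnegcube : ∀ x ∈ {x : Fin n → ℝ | ∀ i, -1 ≤ x i ∧ x i ≤ 1},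
      -x ∈ {x : Fin n → ℝ | ∀ i, -1 ≤ x i ∧ x i ≤ 1} := by
    intro x hx i
    have := hx i
    constructor <;> simp <;> linarith [this.1, this.2]
  -- lower bound on lam j 0
  have hlj0 : ∀ j, t ≤ lam j 0 := by
    intro j
    have h1 : lam j (-(v j)) = 2 * lam j 0 - 1 := by
      rw [hneg j (v j), hdual]; simp
    have h2 := hlow j (-(v j)) (hQ (hnegcube (v j) (hvj j)))
    linarith
  have hsum0 := hsum 0
  have heq : ∀ j, lam j 0 = t := by
    have hz : ∑ j, (lam j 0 - t) = 0 := by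
      rw [Finset.sum_sub_distrib, hsum0, Finset.sum_const, card_univ, Fintype.card_fin,
        nsmul_eq_mul]
      push_cast
      linarith [htn]
    intro j
    have := (Finset.sum_eq_zero_iff_of_nonneg (fun j _ => by linarith [hlj0 j])).mp hz j
      (mem_univ j)
    linarith
  intro j
  refine ⟨by rw [heq j, ht, one_div], ?_, ?_⟩
  · exact ⟨v j, hvj j, by rw [hdual]; simp⟩
  · rintro _ ⟨x, hx, rfl⟩
    have h1 := hlow j (-x) (hQ (hnegcube x hx))
    have h2 : lam j (-x) = 2 * t - lam j x := by rw [hneg, heq j]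
    have h3 : t * ((n:ℝ) + 1) = 1 := htn
    nlinarith

/-- if `S ⊆ [−1,1]^n ⊆ nS` then `λ_j(0) = 1/(n+1)` for all `j`, and the maximum
of `λ_j` over the cube `[−1,1]^n` equals `1`; in particular the cube lies in `{λ_j ≤ 1}`. -/
theorem lagrange_at_zero_and_max {n : ℕ} (v : Fin (n + 1) → (Fin n → ℝ))
    (hv : AffineIndependent ℝ v)
    (lam : Fin (n + 1) → (Fin n → ℝ) → ℝ) (hlam : IsLagrangeBasis v lam)
    (hS : simplexSet v ⊆ symCube n) (hQ : symCube n ⊆ homSimplex v n) :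
    ∀ j, lam j 0 = 1 / ((n : ℝ) + 1) ∧ IsGreatest (lam j '' symCube n) 1 :=
  lagrange_at_zero_and_max' v hv lam hlam hS hQ
end

section
/- If n+1 is an Hadamard number, then ξ_n = n; i.e., there exists a simplex S ⊆ Q_n = [0,1]^n with Q_n ⊆ nS, and for every nondegenerate simplex T ⊆ Q_n one has ξ(T) ≥ n. -/
open Finset MeasureTheory

private lemma affine_eval {n : ℕ} (f : (Fin n → ℝ) →ᵃ[ℝ] ℝ) (x : Fin n → ℝ) :
    f x = ∑ i, x i * (f (fun j => if i = j then 1 else 0) - f 0) + f 0 := by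
  have h1 : ∀ y : Fin n → ℝ, f y = f.linear y + f 0 := by
    intro y
    conv_lhs => rw [f.decomp]
    rfl
  rw [h1 x, LinearMap.pi_apply_eq_sum_univ f.linear x]
  congr 1
  refine Finset.sum_congr rfl fun i _ => ?_
  rw [h1 (fun j => if i = j then 1 else 0)]
  simp only [smul_eq_mul]
  ring

set_option maxHeartbeats 1000000 in
lemma lower_core {n : ℕ} (w : Fin (n+1) → (Fin n → ℝ)) (hw : AffineIndependent ℝ w)
    (hS : simplexSet w ⊆ unitCube n) :
    (∃ σ : ℝ, 1 ≤ σ ∧ unitCube n ⊆ homSimplex w σ) ∧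
    (∀ σ : ℝ, 1 ≤ σ → unitCube n ⊆ homSimplex w σ → (n:ℝ) ≤ σ) := by
  have hm1 : (0:ℝ) < (n:ℝ) + 1 := by positivity
  have htot : affineSpan ℝ (Set.range w) = ⊤ := by
    rw [hw.affineSpan_eq_top_iff_card_eq_finrank_add_one]
    simp [Module.finrank_fin_fun]
  let b : AffineBasis (Fin (n+1)) ℝ (Fin n → ℝ) := ⟨w, hw, htot⟩
  have hbw : ⇑b = w := rfl
  have hmem : ∀ x, x ∈ simplexSet w ↔ ∀ j, 0 ≤ b.coord j x := by
    intro x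
    rw [show simplexSet w = {x | ∀ j, 0 ≤ b.coord j x} from by
      rw [simplexSet, ← hbw, b.convexHull_eq_nonneg_coord]]
    rfl
  have F1 : ∀ x, ∑ j, b.coord j x = 1 := fun x => b.sum_coord_apply_eq_one x
  have F2i : ∀ (x : Fin n → ℝ) (i : Fin n), ∑ j, b.coord j x * w j i = x i := by
    intro x i
    have h := b.affineCombination_coord_eq_self x
    rw [Finset.affineCombination_eq_linear_combination _ _ _ (F1 x)] at h
    calc ∑ j, b.coord j x * w j i = (∑ j, b.coord j x • (b : Fin (n+1) → Fin n → ℝ) j) i := by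
          rw [Finset.sum_apply]; rfl
      _ = x i := by rw [h]
  set L : Fin (n+1) → Fin n → ℝ :=
    fun j i => b.coord j (fun k => if i = k then 1 else 0) - b.coord j 0 with hL
  have hform : ∀ j x, b.coord j x = ∑ i, x i * L j i + b.coord j 0 := by
    intro j x; exact affine_eval (b.coord j) x
  have hL0 : ∀ i, ∑ j, L j i = 0 := by
    intro i
    rw [hL]
    rw [Finset.sum_sub_distrib, F1, F1, sub_self]
  have hb0 : ∑ j, b.coord j 0 = 1 := F1 0
  have hwQ : ∀ j, w j ∈ unitCube n := fun j =>
    hS (subset_convexHull ℝ _ (Set.mem_range_self j))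
  have hLw : ∀ i, ∑ j, L j i * w j i = 1 := by
    intro i
    rw [hL]
    simp only [sub_mul]
    rw [Finset.sum_sub_distrib, F2i _ i, F2i 0 i]
    simp
  have hneg : ∀ i, (1:ℝ) ≤ ∑ j, max (-(L j i)) 0 := by
    intro i
    have hpos : (1:ℝ) ≤ ∑ j, max (L j i) 0 := by
      rw [← hLw i]
      refine Finset.sum_le_sum fun j _ => ?_
      have h1 := (hwQ j i).1
      have h2 := (hwQ j i).2
      rcases le_or_gt 0 (L j i) with h | h
      · calc L j i * w j i ≤ L j i * 1 := by nlinarith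
          _ ≤ max (L j i) 0 := by rw [mul_one]; exact le_max_left _ _
      · calc L j i * w j i ≤ 0 := by nlinarith
          _ ≤ max (L j i) 0 := le_max_right _ _
    have : ∑ j, max (-(L j i)) 0 = ∑ j, (max (L j i) 0 - L j i) := by
      refine Finset.sum_congr rfl fun j _ => ?_
      rcases le_or_gt 0 (L j i) with h | h
      · rw [max_eq_right (by linarith), max_eq_left h]; ring
      · rw [max_eq_left (by linarith), max_eq_right (by linarith)]; ring
    rw [this, Finset.sum_sub_distrib, hL0 i, sub_zero]
    exact hpos
  have hcent : ∀ j, b.coord j (simplexCentroid w) = ((n:ℝ)+1)⁻¹ := by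
    intro j
    have hsum : ∑ _j : Fin (n+1), ((n:ℝ)+1)⁻¹ = 1 := by
      simp [Finset.sum_const, card_univ]
      field_simp
    have hc : simplexCentroid w =
        Finset.univ.affineCombination ℝ w (fun _ => ((n:ℝ)+1)⁻¹) := by
      rw [Finset.affineCombination_eq_linear_combination _ _ _ hsum, simplexCentroid,
        Finset.smul_sum]
    rw [hc]
    exact b.coord_apply_combination_of_mem (Finset.mem_univ j) hsum
  have hline : ∀ (t : ℝ) (p : Fin n → ℝ) (j),
      b.coord j (simplexCentroid w + t • (p - simplexCentroid w))
        = (1 - t) * ((n:ℝ)+1)⁻¹ + t * b.coord j p := by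
    intro t p j
    have h1 : simplexCentroid w + t • (p - simplexCentroid w)
        = AffineMap.lineMap (simplexCentroid w) p t := by
      rw [AffineMap.lineMap_apply]
      simp [vsub_eq_sub, vadd_eq_add]
      abel
    rw [h1, AffineMap.apply_lineMap, AffineMap.lineMap_apply_module, hcent j]
    simp [smul_eq_mul]
  constructor
  · -- existence of some admissible σ
    set m : Fin (n+1) → ℝ := fun j => b.coord j 0 + ∑ k, min (L j k) 0 with hmdef
    have hmle : ∀ j, ∀ x ∈ unitCube n, m j ≤ b.coord j x := by
      intro j x hx
      rw [hform j x]
      show b.coord j 0 + ∑ k, min (L j k) 0 ≤ ∑ i, x i * L j i + b.coord j 0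
      have : ∑ k, min (L j k) 0 ≤ ∑ k, x k * L j k := by
        refine Finset.sum_le_sum fun k _ => ?_
        have h1 := (hx k).1
        have h2 := (hx k).2
        rcases le_or_gt 0 (L j k) with h | h
        · calc min (L j k) 0 ≤ 0 := min_le_right _ _
            _ ≤ x k * L j k := by nlinarith
        · calc min (L j k) 0 ≤ L j k := min_le_left _ _
            _ ≤ x k * L j k := by nlinarith
      linarith
    set σ₀ : ℝ := 1 + ((n:ℝ)+1) * ∑ j, |m j| with hσ₀
    have habs : (0:ℝ) ≤ ∑ j, |m j| := Finset.sum_nonneg fun j _ => abs_nonneg _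
    have hσ₀1 : (1:ℝ) ≤ σ₀ := by
      rw [hσ₀]; nlinarith
    have hσ₀pos : (0:ℝ) < σ₀ := by linarith
    have hkey : ∀ j, 1 - ((n:ℝ)+1) * m j ≤ σ₀ := by
      intro j
      have h1 : -m j ≤ |m j| := neg_le_abs _
      have h2 : |m j| ≤ ∑ j', |m j'| :=
        Finset.single_le_sum (fun j' _ => abs_nonneg (m j')) (Finset.mem_univ j)
      rw [hσ₀]; nlinarith
    refine ⟨σ₀, hσ₀1, fun x hx => ?_⟩
    rw [homSimplex, Set.mem_image]
    refine ⟨simplexCentroid w + σ₀⁻¹ • (x - simplexCentroid w), ?_, ?_⟩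
    · rw [hmem]
      intro j
      rw [hline σ₀⁻¹ x j]
      have h1 : m j ≤ b.coord j x := hmle j x hx
      have h2 : σ₀⁻¹ * σ₀ = 1 := inv_mul_cancel₀ (ne_of_gt hσ₀pos)
      have h3 : (0:ℝ) < σ₀⁻¹ := inv_pos.mpr hσ₀pos
      have h4 := hkey j
      have e1 : (1 - σ₀⁻¹) * (((n:ℝ)+1)⁻¹) + σ₀⁻¹ * m j
          = σ₀⁻¹ * ((n:ℝ)+1)⁻¹ * (σ₀ - 1 + ((n:ℝ)+1) * m j) := by
        field_simp
      have e2 : (0:ℝ) ≤ σ₀ - 1 + ((n:ℝ)+1) * m j := by linarith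
      have e3 : (0:ℝ) ≤ σ₀⁻¹ * ((n:ℝ)+1)⁻¹ * (σ₀ - 1 + ((n:ℝ)+1) * m j) :=
        mul_nonneg (mul_nonneg h3.le (by positivity)) e2
      have e4 := mul_le_mul_of_nonneg_left h1 (le_of_lt h3)
      linarith
    · rw [add_sub_cancel_left, smul_smul, mul_inv_cancel₀ (ne_of_gt hσ₀pos), one_smul]
      abel
  · -- lower bound
    intro σ hσ1 hQ
    have hσ0 : (0:ℝ) ≤ σ := by linarith
    have hyineq : ∀ j, (1 - σ) * ((n:ℝ)+1)⁻¹ ≤ ∑ k, min (L j k) 0 + b.coord j 0 := by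
      intro j
      set y : Fin n → ℝ := fun k => if L j k ≤ 0 then 1 else 0 with hy
      have hyQ : y ∈ unitCube n := by
        intro k; rw [hy]; dsimp only; split <;> norm_num
      obtain ⟨z, hz, hxz⟩ := hQ hyQ
      have hz0 : 0 ≤ b.coord j z := (hmem z).1 hz j
      have hval : b.coord j y = (1 - σ) * ((n:ℝ)+1)⁻¹ + σ * b.coord j z := by
        rw [← hxz]; exact hline σ z j
      have hval2 : b.coord j y = ∑ k, min (L j k) 0 + b.coord j 0 := by
        rw [hform j y]
        congr 1
        refine Finset.sum_congr rfl fun k _ => ?_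
        rw [hy]; dsimp only
        rcases le_or_gt (L j k) 0 with h | h
        · rw [if_pos h, one_mul, min_eq_left h]
        · rw [if_neg (not_le.mpr h), zero_mul, min_eq_right (le_of_lt h)]
      nlinarith [mul_nonneg hσ0 hz0]
    have hsumy : (1 - σ) ≤ ∑ j, (∑ k, min (L j k) 0 + b.coord j 0) := by
      have h7 := Finset.sum_le_sum (fun j (_ : j ∈ Finset.univ) => hyineq j)
      have hcard : ∑ _j : Fin (n+1), (1 - σ) * (((n:ℝ)+1)⁻¹)
          = ((n:ℝ)+1) * ((1 - σ) * ((n:ℝ)+1)⁻¹) := by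
        rw [Finset.sum_const, card_univ, Fintype.card_fin, nsmul_eq_mul]
        push_cast
        ring
      rw [hcard] at h7
      have h6 : ((n:ℝ)+1) * ((1 - σ) * ((n:ℝ)+1)⁻¹) = 1 - σ := by field_simp
      linarith
    have hminmax : ∀ j k, min (L j k) 0 = -(max (-(L j k)) 0) := by
      intro j k
      rcases le_or_gt (L j k) 0 with h | h
      · rw [min_eq_left h, max_eq_left (by linarith)]; ring
      · rw [min_eq_right (le_of_lt h), max_eq_right (by linarith)]; ring
    have hA : ∑ j, ∑ k, min (L j k) 0 ≤ -(n:ℝ) := by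
      have : ∑ j, ∑ k, min (L j k) 0 = -∑ k, ∑ j, max (-(L j k)) 0 := by
        rw [Finset.sum_comm]
        rw [← Finset.sum_neg_distrib]
        refine Finset.sum_congr rfl fun k _ => ?_
        rw [← Finset.sum_neg_distrib]
        exact Finset.sum_congr rfl fun j _ => hminmax j k
      rw [this, neg_le_neg_iff]
      calc (n:ℝ) = ∑ _k : Fin n, (1:ℝ) := by simp
        _ ≤ ∑ k, ∑ j, max (-(L j k)) 0 := Finset.sum_le_sum fun k _ => hneg k
    rw [Finset.sum_add_distrib, hb0] at hsumy
    linarith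

private lemma convex_unitCube (n : ℕ) : Convex ℝ (unitCube n) := by
  intro x hx y hy a b ha hb hab i
  have h1 := hx i
  have h2 := hy i
  constructor <;> simp only [Pi.add_apply, Pi.smul_apply, smul_eq_mul]
  · nlinarith
  · nlinarith

set_option maxHeartbeats 1000000 in
lemma upper_core {n : ℕ} (hn : 0 < n)
    (hH : ∃ H : Matrix (Fin (n + 1)) (Fin (n + 1)) ℝ,
      (∀ i j, H i j = 1 ∨ H i j = -1) ∧ H * H.transpose = ((n : ℝ) + 1) • 1) :
    ∃ v : Fin (n + 1) → (Fin n → ℝ), AffineIndependent ℝ v ∧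
      simplexSet v ⊆ unitCube n ∧ unitCube n ⊆ homSimplex v n := by
  obtain ⟨H, hpm, horth⟩ := hH
  have hm1 : (0:ℝ) < (n:ℝ) + 1 := by positivity
  have hmne : ((n:ℝ) + 1) ≠ 0 := ne_of_gt hm1
  have hnne : (n:ℝ) ≠ 0 := by
    exact (Nat.cast_pos.mpr hn).ne'
  -- entrywise row orthogonality of H
  have hrow : ∀ i j, ∑ k, H i k * H j k = if i = j then (n:ℝ)+1 else 0 := by
    intro i j
    have h := congrFun (congrFun horth i) j
    rw [Matrix.mul_apply] at h
    simp only [Matrix.transpose_apply, Matrix.smul_apply, Matrix.one_apply, smul_eq_mul,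
      mul_ite, mul_one, mul_zero] at h
    exact h
  -- normalized matrix G with first column all ones
  set G : Fin (n+1) → Fin (n+1) → ℝ := fun i k => H i 0 * H i k with hGdef
  have hG1 : ∀ i k, G i k = 1 ∨ G i k = -1 := by
    intro i k
    rcases hpm i 0 with h0 | h0 <;> rcases hpm i k with hk | hk <;>
      simp [hGdef, h0, hk]
  have hG0 : ∀ i, G i 0 = 1 := by
    intro i
    rcases hpm i 0 with h0 | h0 <;> simp [hGdef, h0]
  have hGrow : ∀ i j, ∑ k, G i k * G j k = if i = j then (n:ℝ)+1 else 0 := by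
    intro i j
    have hc : ∑ k, G i k * G j k = (H i 0 * H j 0) * ∑ k, H i k * H j k := by
      rw [Finset.mul_sum]
      refine Finset.sum_congr rfl fun k _ => ?_
      simp only [hGdef]
      ring
    rw [hc, hrow i j]
    by_cases hij : i = j
    · subst hij
      rcases hpm i 0 with h0 | h0 <;> simp [h0]
    · simp [hij]
  -- column orthogonality via matrix inverse commutation
  have hGcol : ∀ k l, ∑ j, G j k * G j l = if k = l then (n:ℝ)+1 else 0 := by
    set Gm : Matrix (Fin (n+1)) (Fin (n+1)) ℝ := Matrix.of G with hGm
    have hGG : Gm * Gm.transpose = ((n:ℝ)+1) • 1 := by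
      ext i j
      rw [Matrix.mul_apply]
      simp only [Matrix.transpose_apply, Matrix.smul_apply, Matrix.one_apply, smul_eq_mul,
        mul_ite, mul_one, mul_zero]
      exact hGrow i j
    have h1 : Gm * (((n:ℝ)+1)⁻¹ • Gm.transpose) = 1 := by
      rw [Matrix.mul_smul, hGG, smul_smul, inv_mul_cancel₀ hmne, one_smul]
    have h2 : (((n:ℝ)+1)⁻¹ • Gm.transpose) * Gm = 1 := mul_eq_one_comm.mp h1
    have h3 : Gm.transpose * Gm = ((n:ℝ)+1) • 1 := by
      rw [Matrix.smul_mul] at h2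
      calc Gm.transpose * Gm
          = ((n:ℝ)+1) • (((n:ℝ)+1)⁻¹ • (Gm.transpose * Gm)) := by
            rw [smul_smul, mul_inv_cancel₀ hmne, one_smul]
        _ = ((n:ℝ)+1) • (1 : Matrix (Fin (n+1)) (Fin (n+1)) ℝ) := by rw [h2]
    intro k l
    have h := congrFun (congrFun h3 k) l
    rw [Matrix.mul_apply] at h
    simp only [Matrix.transpose_apply, Matrix.smul_apply, Matrix.one_apply, smul_eq_mul,
      mul_ite, mul_one, mul_zero] at h
    exact h
  -- column sums
  have hcs : ∀ k, ∑ j, G j k = if k = 0 then (n:ℝ)+1 else 0 := by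
    intro k
    have : ∑ j, G j k = ∑ j, G j k * G j 0 := by
      refine Finset.sum_congr rfl fun j _ => ?_
      rw [hG0 j, mul_one]
    rw [this, hGcol k 0]
  -- the vertices
  set v : Fin (n+1) → Fin n → ℝ := fun j i => (1 + G j i.succ) / 2 with hvdef
  have hv01 : ∀ j i, v j i = 0 ∨ v j i = 1 := by
    intro j i
    rcases hG1 j i.succ with h | h <;> [right; left] <;> simp [hvdef, h] <;> norm_num
  have hvQ : ∀ j, v j ∈ unitCube n := by
    intro j i
    rcases hv01 j i with h | h <;> rw [h] <;> norm_num
  refine ⟨v, ?_, ?_, ?_⟩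
  · -- affine independence
    rw [affineIndependent_iff_of_fintype]
    intro c hc0 hcv j
    rw [Finset.weightedVSub_eq_linear_combination _ hc0] at hcv
    have hci : ∀ i : Fin n, ∑ j, c j * v j i = 0 := by
      intro i
      have h := congrFun hcv i
      simpa [Finset.sum_apply] using h
    have hGc : ∀ k, ∑ l, c l * G l k = 0 := by
      intro k
      refine Fin.cases ?_ ?_ k
      · have : ∑ l, c l * G l 0 = ∑ l, c l := by
          refine Finset.sum_congr rfl fun l _ => by rw [hG0 l, mul_one]
        rw [this, hc0]
      · intro i
        have h1 : (∑ l, c l) / 2 + (∑ l, c l * G l i.succ) / 2 = ∑ l, c l * v l i := by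
          rw [Finset.sum_div, Finset.sum_div, ← Finset.sum_add_distrib]
          refine Finset.sum_congr rfl fun l _ => ?_
          simp only [hvdef]
          ring
        have h2 := h1.trans (hci i)
        rw [hc0] at h2
        linarith
    have hkey : ((n:ℝ)+1) * c j = 0 := by
      have e1 : ∑ l, c l * (∑ k, G j k * G l k) = ((n:ℝ)+1) * c j := by
        have : ∀ l, c l * (∑ k, G j k * G l k) = if j = l then ((n:ℝ)+1) * c l else 0 := by
          intro l
          rw [hGrow j l]
          by_cases h : j = l <;> simp [h] <;> ring
        rw [Finset.sum_congr rfl fun l _ => this l]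
        simp
      have e2 : ∑ l, c l * (∑ k, G j k * G l k) = ∑ k, G j k * (∑ l, c l * G l k) := by
        calc ∑ l, c l * (∑ k, G j k * G l k)
            = ∑ l, ∑ k, G j k * (c l * G l k) := by
              refine Finset.sum_congr rfl fun l _ => ?_
              rw [Finset.mul_sum]
              exact Finset.sum_congr rfl fun k _ => by ring
          _ = ∑ k, ∑ l, G j k * (c l * G l k) := Finset.sum_comm
          _ = ∑ k, G j k * (∑ l, c l * G l k) :=
              Finset.sum_congr rfl fun k _ => (Finset.mul_sum _ _ _).symm
      rw [e2] at e1
      simp only [hGc, mul_zero, Finset.sum_const_zero] at e1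
      exact e1.symm
    rcases mul_eq_zero.mp hkey with h | h
    · exact absurd h hmne
    · exact h
  · -- simplex inside cube
    refine convexHull_min ?_ (convex_unitCube n)
    rintro y ⟨j, rfl⟩
    exact hvQ j
  · -- cube inside n-fold homothety
    intro x hx
    set lam : Fin (n+1) → ℝ :=
      fun j => (2 + 2 * ∑ k : Fin n, G j k.succ * x k - ∑ k, G j k) / ((n:ℝ)+1) with hlamdef
    set μ : Fin (n+1) → ℝ :=
      fun j => (n:ℝ)⁻¹ * lam j + (1 - (n:ℝ)⁻¹) / ((n:ℝ)+1) with hμdef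
    -- sum of lam is 1
    have hA : ∑ j, ∑ k : Fin n, G j k.succ * x k = 0 := by
      rw [Finset.sum_comm]
      have : ∀ k : Fin n, ∑ j, G j k.succ * x k = 0 := by
        intro k
        rw [← Finset.sum_mul]
        rw [hcs k.succ, if_neg (Fin.succ_ne_zero k), zero_mul]
      simp [this]
    have hB : ∑ j, ∑ k, G j k = (n:ℝ)+1 := by
      rw [Finset.sum_comm]
      rw [Finset.sum_congr rfl fun k (_ : k ∈ Finset.univ) => hcs k]
      simp
    have hlam_sum : ∑ j, lam j = 1 := by
      rw [hlamdef]
      rw [← Finset.sum_div]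
      rw [Finset.sum_sub_distrib, Finset.sum_add_distrib, ← Finset.mul_sum, hA, hB]
      simp only [Finset.sum_const, card_univ, Fintype.card_fin, nsmul_eq_mul, mul_zero]
      push_cast
      field_simp
      ring
    -- lower bound for lam
    have hlam_lb : ∀ j, (1 - (n:ℝ)) / ((n:ℝ)+1) ≤ lam j := by
      intro j
      rw [hlamdef]
      rw [div_le_div_iff_of_pos_right hm1]
      have hterm : ∀ k : Fin n, (G j k.succ - 1) / 2 ≤ G j k.succ * x k := by
        intro k
        rcases hG1 j k.succ with h | h <;> rw [h]
        · have := (hx k).1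
          linarith
        · have := (hx k).2
          linarith
      have hsum : ∑ k : Fin n, (G j k.succ - 1) / 2 ≤ ∑ k : Fin n, G j k.succ * x k :=
        Finset.sum_le_sum fun k _ => hterm k
      have hval : ∑ k : Fin n, (G j k.succ - 1) / 2
          = ((∑ k, G j k) - 1 - (n:ℝ)) / 2 := by
        have hr : ∑ k, G j k = 1 + ∑ k : Fin n, G j k.succ := by
          rw [Fin.sum_univ_succ, hG0 j]
        rw [hr]
        rw [← Finset.sum_div, Finset.sum_sub_distrib]
        simp only [Finset.sum_const, card_univ, Fintype.card_fin, nsmul_eq_mul, mul_one]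
        ring
      rw [hval] at hsum
      linarith
    -- nonnegativity and sum of μ
    have hninv : (0:ℝ) < (n:ℝ)⁻¹ := by
      have : (0:ℝ) < (n:ℝ) := Nat.cast_pos.mpr hn
      positivity
    have hμ0 : ∀ j, 0 ≤ μ j := by
      intro j
      rw [hμdef]
      have h0 : (n:ℝ)⁻¹ * ((1-(n:ℝ))/((n:ℝ)+1)) + (1 - (n:ℝ)⁻¹)/((n:ℝ)+1) = 0 := by
        field_simp
        ring
      have h1 := mul_le_mul_of_nonneg_left (hlam_lb j) hninv.le
      dsimp only
      linarith
    have hμ_sum : ∑ j, μ j = 1 := by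
      rw [hμdef]
      rw [Finset.sum_add_distrib, ← Finset.mul_sum, hlam_sum]
      simp only [Finset.sum_const, card_univ, Fintype.card_fin, nsmul_eq_mul, mul_one]
      push_cast
      field_simp
      ring
    -- Lagrange interpolation: ∑ lam j * v j = x
    have hinterp : ∀ i : Fin n, ∑ j, lam j * v j i = x i := by
      intro i
      have hT : ∑ j, lam j * G j i.succ = 2 * x i - 1 := by
        have hsplit : ∀ j, lam j * G j i.succ
            = (2 * G j i.succ + 2 * ((∑ k : Fin n, G j k.succ * x k) * G j i.succ)
              - (∑ k, G j k) * G j i.succ) / ((n:ℝ)+1) := by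
          intro j
          rw [hlamdef]
          ring
        rw [Finset.sum_congr rfl fun j _ => hsplit j, ← Finset.sum_div]
        have hC1 : ∑ j, G j i.succ = 0 := by
          rw [hcs i.succ, if_neg (Fin.succ_ne_zero i)]
        have hC2 : ∑ j, (∑ k : Fin n, G j k.succ * x k) * G j i.succ = ((n:ℝ)+1) * x i := by
          calc ∑ j, (∑ k : Fin n, G j k.succ * x k) * G j i.succ
              = ∑ j, ∑ k : Fin n, x k * (G j k.succ * G j i.succ) := by
                refine Finset.sum_congr rfl fun j _ => ?_
                rw [Finset.sum_mul]
                exact Finset.sum_congr rfl fun k _ => by ring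
            _ = ∑ k : Fin n, ∑ j, x k * (G j k.succ * G j i.succ) := Finset.sum_comm
            _ = ∑ k : Fin n, x k * (if k = i then (n:ℝ)+1 else 0) := by
                refine Finset.sum_congr rfl fun k _ => ?_
                rw [← Finset.mul_sum, hGcol k.succ i.succ]
                congr 1
                simp [Fin.succ_inj]
            _ = ((n:ℝ)+1) * x i := by
                simp [Finset.sum_ite_eq, mul_comm]
        have hC3 : ∑ j, (∑ k, G j k) * G j i.succ = (n:ℝ)+1 := by
          calc ∑ j, (∑ k, G j k) * G j i.succ
              = ∑ j, ∑ k, G j k * G j i.succ := by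
                refine Finset.sum_congr rfl fun j _ => ?_
                rw [Finset.sum_mul]
            _ = ∑ k, ∑ j, G j k * G j i.succ := Finset.sum_comm
            _ = ∑ k, if k = i.succ then (n:ℝ)+1 else 0 := by
                exact Finset.sum_congr rfl fun k _ => hGcol k i.succ
            _ = (n:ℝ)+1 := by simp
        rw [Finset.sum_sub_distrib, Finset.sum_add_distrib, ← Finset.mul_sum, ← Finset.mul_sum,
          hC1, hC2, hC3]
        field_simp
        ring
      have : ∑ j, lam j * v j i = (∑ j, lam j) / 2 + (∑ j, lam j * G j i.succ) / 2 := by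
        rw [Finset.sum_div, Finset.sum_div, ← Finset.sum_add_distrib]
        refine Finset.sum_congr rfl fun j _ => ?_
        simp only [hvdef]
        ring
      rw [this, hlam_sum, hT]
      ring
    -- the witness point
    refine ⟨∑ j, μ j • v j, ?_, ?_⟩
    · have := _root_.affineCombination_mem_convexHull
        (v := v) (fun j (_ : j ∈ Finset.univ) => hμ0 j) hμ_sum
      rwa [Finset.affineCombination_eq_linear_combination _ _ _ hμ_sum] at this
    · dsimp only
      funext i
      have hzi : (∑ j, μ j • v j) i
          = (n:ℝ)⁻¹ * x i + ((1 - (n:ℝ)⁻¹)/((n:ℝ)+1)) * ∑ j, v j i := by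
        rw [Finset.sum_apply]
        have : ∀ j, (μ j • v j) i
            = (n:ℝ)⁻¹ * (lam j * v j i) + ((1 - (n:ℝ)⁻¹)/((n:ℝ)+1)) * v j i := by
          intro j
          rw [hμdef]
          simp only [Pi.smul_apply, smul_eq_mul]
          ring
        rw [Finset.sum_congr rfl fun j _ => this j, Finset.sum_add_distrib,
          ← Finset.mul_sum, ← Finset.mul_sum, hinterp i]
      have hci : simplexCentroid v i = ((n:ℝ)+1)⁻¹ * ∑ j, v j i := by
        rw [simplexCentroid]
        simp [Finset.sum_apply]
      simp only [Pi.add_apply, Pi.smul_apply, Pi.sub_apply, smul_eq_mul]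
      rw [hzi, hci]
      field_simp
      ring

/-- if `n+1` is an Hadamard number then `ξ_n = n`: there is a nondegenerate
simplex `S ⊆ Q_n` with `Q_n ⊆ nS`, and every nondegenerate simplex `T ⊆ Q_n` has `ξ(T) ≥ n`. -/
theorem xi_n_eq_n_of_hadamard {n : ℕ}
    (hH : ∃ H : Matrix (Fin (n + 1)) (Fin (n + 1)) ℝ,
      (∀ i j, H i j = 1 ∨ H i j = -1) ∧ H * H.transpose = ((n : ℝ) + 1) • 1) :
    (∃ v : Fin (n + 1) → (Fin n → ℝ), AffineIndependent ℝ v ∧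
      simplexSet v ⊆ unitCube n ∧ unitCube n ⊆ homSimplex v n) ∧
    (∀ w : Fin (n + 1) → (Fin n → ℝ), AffineIndependent ℝ w →
      simplexSet w ⊆ unitCube n → (n : ℝ) ≤ xiVal w) := by
  constructor
  · rcases Nat.eq_zero_or_pos n with hn | hn
    · subst hn
      haveI : Subsingleton (Fin (0+1)) := ⟨fun a b => Fin.ext (by omega)⟩
      refine ⟨fun _ => 0, affineIndependent_of_subsingleton ℝ _, ?_, ?_⟩
      · intro y _ i
        exact i.elim0
      · intro x _
        exact ⟨0, subset_convexHull ℝ _ ⟨0, rfl⟩, Subsingleton.elim _ x⟩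
    · exact upper_core hn hH
  · intro w hw hsub
    obtain ⟨⟨σ₀, hσ₀⟩, hlb⟩ := lower_core w hw hsub
    exact le_csInf ⟨σ₀, hσ₀⟩ fun σ hσ => hlb σ hσ.1 hσ.2
end

section
/- For the simplex S₁ ⊂ R³ with vertices (0,0,0), (1,1,0), (1,0,1), (0,1,1), one has ξ(S₁) = 3, all three axial diameters d_i(S₁) equal 1, and α(S₁) = 3. -/
open Finset MeasureTheory

/-- The vertices of the simplex `S₁ ⊂ ℝ³`. -/
def S1verts : Fin 4 → (Fin 3 → ℝ) :=
  ![![0, 0, 0], ![1, 1, 0], ![1, 0, 1], ![0, 1, 1]]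

def Sdesc : Set (Fin 3 → ℝ) :=
  {x | 0 ≤ x 0 + x 1 - x 2 ∧ 0 ≤ x 0 - x 1 + x 2 ∧ 0 ≤ -x 0 + x 1 + x 2 ∧
    x 0 + x 1 + x 2 ≤ 2}

lemma simplex_eq : simplexSet S1verts = Sdesc := by
  apply Set.Subset.antisymm
  · apply convexHull_min
    · rintro _ ⟨j, rfl⟩
      fin_cases j <;> simp [S1verts, Sdesc] <;> norm_num
    · rintro x hx y hy a b ha hb hab
      simp only [Sdesc, Set.mem_setOf_eq, Pi.add_apply, Pi.smul_apply, smul_eq_mul] at *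
      obtain ⟨h1, h2, h3, h4⟩ := hx
      obtain ⟨k1, k2, k3, k4⟩ := hy
      refine ⟨?_, ?_, ?_, ?_⟩ <;> nlinarith [mul_nonneg ha h1, mul_nonneg hb k1,
        mul_nonneg ha h2, mul_nonneg hb k2, mul_nonneg ha h3, mul_nonneg hb k3,
        mul_le_mul_of_nonneg_left h4 ha, mul_le_mul_of_nonneg_left k4 hb]
  · intro x hx
    obtain ⟨h1, h2, h3, h4⟩ := hx
    set w : Fin 4 → ℝ := ![1 - (x 0 + x 1 + x 2)/2, (x 0 + x 1 - x 2)/2,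
      (x 0 - x 1 + x 2)/2, (-x 0 + x 1 + x 2)/2] with hw
    have hwn : ∀ j ∈ Finset.univ, 0 ≤ w j := by
      intro j _; fin_cases j <;> simp [hw] <;> linarith
    have hws : 0 < ∑ j, w j := by
      simp [hw, Fin.sum_univ_four]; linarith
    have hmem : ∀ j ∈ Finset.univ, S1verts j ∈ Set.range S1verts := fun j _ => ⟨j, rfl⟩
    have := Finset.centerMass_mem_convexHull Finset.univ hwn hws hmem
    have heq : Finset.univ.centerMass w S1verts = x := by
      have hsum : ∑ j, w j = 1 := by simp [hw, Fin.sum_univ_four]; ring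
      rw [Finset.centerMass, hsum]
      funext i
      fin_cases i <;>
        simp [hw, S1verts, Fin.sum_univ_four, Pi.smul_apply, smul_eq_mul] <;> ring
    rw [heq] at this
    exact this

lemma centroid_eq : simplexCentroid S1verts = fun _ => (1/2 : ℝ) := by
  funext i
  fin_cases i <;>
    simp [simplexCentroid, S1verts, Fin.sum_univ_four, Pi.smul_apply, smul_eq_mul] <;> norm_num

lemma key_ineq {σ t : ℝ} (h3 : 3 ≤ σ) (ht : -(3/2) ≤ t) : 0 ≤ 1/2 + σ⁻¹ * t := by
  have hσ0 : (0:ℝ) < σ := by linarith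
  have h := mul_inv_cancel₀ hσ0.ne'
  nlinarith [inv_pos.mpr hσ0]

lemma key_ineq' {σ t : ℝ} (h3 : 3 ≤ σ) (ht : t ≤ 3/2) : σ⁻¹ * t ≤ 1/2 := by
  have := key_ineq h3 (show -(3/2) ≤ -t by linarith)
  nlinarith

lemma cube_subset_iff {σ : ℝ} (hσ : 1 ≤ σ) :
    unitCube 3 ⊆ homSimplex S1verts σ ↔ 3 ≤ σ := by
  have hσ0 : (0:ℝ) < σ := lt_of_lt_of_le one_pos hσ
  constructor
  · intro h
    have hy : (![0,0,1] : Fin 3 → ℝ) ∈ unitCube 3 := by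
      intro i; fin_cases i <;> norm_num [unitCube]
    obtain ⟨x, hx, hxe⟩ := h hy
    rw [simplex_eq] at hx
    rw [centroid_eq] at hxe
    have e0 := congrFun hxe 0
    have e1 := congrFun hxe 1
    have e2 := congrFun hxe 2
    simp only [Pi.add_apply, Pi.smul_apply, Pi.sub_apply, smul_eq_mul,
      Matrix.cons_val_zero, Matrix.cons_val_one, Matrix.head_cons,
      Matrix.cons_val_two, Matrix.tail_cons] at e0 e1 e2
    obtain ⟨h1, _, _, _⟩ := hx
    nlinarith [mul_nonneg hσ0.le h1]
  · intro h3 y hy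
    have hy0 := hy 0; have hy1 := hy 1; have hy2 := hy 2
    refine ⟨fun i => 1/2 + σ⁻¹ * (y i - 1/2), ?_, ?_⟩
    · rw [simplex_eq]
      refine ⟨?_, ?_, ?_, ?_⟩
      · have := key_ineq h3 (show -(3/2) ≤ (y 0 - 1/2) + (y 1 - 1/2) - (y 2 - 1/2) by linarith)
        calc (0:ℝ) ≤ 1/2 + σ⁻¹ * ((y 0 - 1/2) + (y 1 - 1/2) - (y 2 - 1/2)) := this
        _ = (1/2 + σ⁻¹ * (y 0 - 1/2)) + (1/2 + σ⁻¹ * (y 1 - 1/2)) - (1/2 + σ⁻¹ * (y 2 - 1/2)) := by ring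
      · have := key_ineq h3 (show -(3/2) ≤ (y 0 - 1/2) - (y 1 - 1/2) + (y 2 - 1/2) by linarith)
        calc (0:ℝ) ≤ 1/2 + σ⁻¹ * ((y 0 - 1/2) - (y 1 - 1/2) + (y 2 - 1/2)) := this
        _ = (1/2 + σ⁻¹ * (y 0 - 1/2)) - (1/2 + σ⁻¹ * (y 1 - 1/2)) + (1/2 + σ⁻¹ * (y 2 - 1/2)) := by ring
      · have := key_ineq h3 (show -(3/2) ≤ -(y 0 - 1/2) + (y 1 - 1/2) + (y 2 - 1/2) by linarith)
        calc (0:ℝ) ≤ 1/2 + σ⁻¹ * (-(y 0 - 1/2) + (y 1 - 1/2) + (y 2 - 1/2)) := this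
        _ = -(1/2 + σ⁻¹ * (y 0 - 1/2)) + (1/2 + σ⁻¹ * (y 1 - 1/2)) + (1/2 + σ⁻¹ * (y 2 - 1/2)) := by ring
      · have := key_ineq' h3 (show (y 0 - 1/2) + (y 1 - 1/2) + (y 2 - 1/2) ≤ 3/2 by linarith)
        calc (1/2 + σ⁻¹ * (y 0 - 1/2)) + (1/2 + σ⁻¹ * (y 1 - 1/2)) + (1/2 + σ⁻¹ * (y 2 - 1/2))
            = 3/2 + σ⁻¹ * ((y 0 - 1/2) + (y 1 - 1/2) + (y 2 - 1/2)) := by ring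
        _ ≤ 2 := by linarith
    · rw [centroid_eq]
      funext i
      simp only [Pi.add_apply, Pi.smul_apply, Pi.sub_apply, smul_eq_mul]
      rw [add_sub_cancel_left, ← mul_assoc, mul_inv_cancel₀ hσ0.ne', one_mul]
      ring

lemma xi_eq : xiVal S1verts = 3 := by
  have hset : {σ : ℝ | 1 ≤ σ ∧ unitCube 3 ⊆ homSimplex S1verts σ} = Set.Ici 3 := by
    ext σ
    simp only [Set.mem_setOf_eq, Set.mem_Ici]
    constructor
    · rintro ⟨h1, h2⟩; exact (cube_subset_iff h1).mp h2
    · intro h; have h1 : (1:ℝ) ≤ σ := by linarith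
      exact ⟨h1, (cube_subset_iff h1).mpr h⟩
  rw [xiVal, hset, csInf_Ici]

lemma axial_eq : ∀ i, axialDiam (simplexSet S1verts) i = 1 := by
  intro i
  unfold axialDiam
  rw [simplex_eq]
  fin_cases i
  · have hub : ∀ t ∈ {t : ℝ | ∃ x ∈ Sdesc, ∃ y ∈ Sdesc,
        (∀ k, k ≠ (0 : Fin 3) → x k = y k) ∧ y 0 - x 0 = t}, t ≤ 1 := by
      rintro t ⟨x, hx, y, hy, hk, rfl⟩
      have e1 := hk 1 (by decide)
      have e2 := hk 2 (by decide)
      obtain ⟨a1, a2, a3, a4⟩ := hx; obtain ⟨b1, b2, b3, b4⟩ := hy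
      linarith
    have hmem : (1:ℝ) ∈ {t : ℝ | ∃ x ∈ Sdesc, ∃ y ∈ Sdesc,
        (∀ k, k ≠ (0 : Fin 3) → x k = y k) ∧ y 0 - x 0 = t} := by
      refine ⟨![0, 1/2, 1/2], ?_, ![1, 1/2, 1/2], ?_, ?_, ?_⟩
      · refine ⟨?_, ?_, ?_, ?_⟩ <;> norm_num [Matrix.cons_val_two, Matrix.tail_cons, Matrix.head_cons]
      · refine ⟨?_, ?_, ?_, ?_⟩ <;> norm_num [Matrix.cons_val_two, Matrix.tail_cons, Matrix.head_cons]
      · intro k hkk; fin_cases k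
        · exact absurd rfl hkk
        · norm_num
        · norm_num
      · norm_num
    exact le_antisymm (csSup_le ⟨1, hmem⟩ hub) (le_csSup ⟨1, hub⟩ hmem)
  · have hub : ∀ t ∈ {t : ℝ | ∃ x ∈ Sdesc, ∃ y ∈ Sdesc,
        (∀ k, k ≠ (1 : Fin 3) → x k = y k) ∧ y 1 - x 1 = t}, t ≤ 1 := by
      rintro t ⟨x, hx, y, hy, hk, rfl⟩
      have e1 := hk 0 (by decide)
      have e2 := hk 2 (by decide)
      obtain ⟨a1, a2, a3, a4⟩ := hx; obtain ⟨b1, b2, b3, b4⟩ := hy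
      linarith
    have hmem : (1:ℝ) ∈ {t : ℝ | ∃ x ∈ Sdesc, ∃ y ∈ Sdesc,
        (∀ k, k ≠ (1 : Fin 3) → x k = y k) ∧ y 1 - x 1 = t} := by
      refine ⟨![1/2, 0, 1/2], ?_, ![1/2, 1, 1/2], ?_, ?_, ?_⟩
      · refine ⟨?_, ?_, ?_, ?_⟩ <;> norm_num [Matrix.cons_val_two, Matrix.tail_cons, Matrix.head_cons]
      · refine ⟨?_, ?_, ?_, ?_⟩ <;> norm_num [Matrix.cons_val_two, Matrix.tail_cons, Matrix.head_cons]
      · intro k hkk; fin_cases k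
        · norm_num
        · exact absurd rfl hkk
        · norm_num
      · norm_num
    exact le_antisymm (csSup_le ⟨1, hmem⟩ hub) (le_csSup ⟨1, hub⟩ hmem)
  · have hub : ∀ t ∈ {t : ℝ | ∃ x ∈ Sdesc, ∃ y ∈ Sdesc,
        (∀ k, k ≠ (2 : Fin 3) → x k = y k) ∧ y 2 - x 2 = t}, t ≤ 1 := by
      rintro t ⟨x, hx, y, hy, hk, rfl⟩
      have e1 := hk 0 (by decide)
      have e2 := hk 1 (by decide)
      obtain ⟨a1, a2, a3, a4⟩ := hx; obtain ⟨b1, b2, b3, b4⟩ := hy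
      linarith
    have hmem : (1:ℝ) ∈ {t : ℝ | ∃ x ∈ Sdesc, ∃ y ∈ Sdesc,
        (∀ k, k ≠ (2 : Fin 3) → x k = y k) ∧ y 2 - x 2 = t} := by
      refine ⟨![1/2, 1/2, 0], ?_, ![1/2, 1/2, 1], ?_, ?_, ?_⟩
      · refine ⟨?_, ?_, ?_, ?_⟩ <;> norm_num [Matrix.cons_val_two, Matrix.tail_cons, Matrix.head_cons]
      · refine ⟨?_, ?_, ?_, ?_⟩ <;> norm_num [Matrix.cons_val_two, Matrix.tail_cons, Matrix.head_cons]
      · intro k hkk; fin_cases k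
        · norm_num
        · norm_num
        · exact absurd rfl hkk
      · norm_num [Matrix.cons_val_two, Matrix.tail_cons, Matrix.head_cons]
    exact le_antisymm (csSup_le ⟨1, hmem⟩ hub) (le_csSup ⟨1, hub⟩ hmem)


/-- `ξ(S₁) = 3`, all three axial diameters equal `1`, and `α(S₁) = 3`. -/
theorem S1_props :
    xiVal S1verts = 3 ∧
    (∀ i, axialDiam (simplexSet S1verts) i = 1) ∧
    (∑ i, (axialDiam (simplexSet S1verts) i)⁻¹) = 3 := by
  refine ⟨xi_eq, axial_eq, ?_⟩
  rw [Fin.sum_univ_three, axial_eq 0, axial_eq 1, axial_eq 2]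
  norm_num
end

section
/- ξ₅ = 5: there exists a nondegenerate simplex S ⊆ [0,1]⁵ with [0,1]⁵ ⊆ 5S, and for every nondegenerate simplex T ⊆ [0,1]⁵ the minimal σ ≥ 1 with [0,1]⁵ ⊆ σT is at least 5. -/
open Finset MeasureTheory

namespace XiAux

/-- standard basis vector -/
def ee (i : Fin 5) : Fin 5 → ℝ := fun j => if i = j then 1 else 0

lemma max_neg_eq (a : ℝ) : max (-a) 0 = (|a| - a)/2 := by
  rcases le_total 0 a with h | h
  · rw [max_eq_right (by linarith), abs_of_nonneg h]; ring
  · rw [max_eq_left (by linarith), abs_of_nonpos h]; ring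

lemma max_pos_eq (a : ℝ) : max a 0 = (|a| + a)/2 := by
  rcases le_total 0 a with h | h
  · rw [max_eq_left h, abs_of_nonneg h]; ring
  · rw [max_eq_right h, abs_of_nonpos h]; ring

variable (b : AffineBasis (Fin 6) ℝ (Fin 5 → ℝ))

lemma centroid_coord (j : Fin 6) : b.coord j (simplexCentroid ⇑b) = 6⁻¹ := by
  have hsum : ∑ _j : Fin 6, (6:ℝ)⁻¹ = 1 := by simp
  have hc : simplexCentroid ⇑b =
      Finset.univ.affineCombination ℝ ⇑b (fun _ => (6:ℝ)⁻¹) := by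
    rw [Finset.affineCombination_eq_linear_combination _ _ _ hsum]
    simp only [simplexCentroid]
    rw [Finset.smul_sum]
    norm_num
  rw [hc]
  exact b.coord_apply_combination_of_mem (Finset.mem_univ j) hsum

lemma repro (x : Fin 5 → ℝ) : ∑ j, b.coord j x • b j = x := by
  conv_rhs => rw [← b.affineCombination_coord_eq_self x]
  rw [Finset.affineCombination_eq_linear_combination _ _ _ (b.sum_coord_apply_eq_one x)]

lemma coord_add (j : Fin 6) (u x : Fin 5 → ℝ) :
    b.coord j (u + x) = (b.coord j).linear u + b.coord j x := by
  have := (b.coord j).map_vadd x u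
  simpa [vadd_eq_add, add_comm] using this

lemma coord_eval (j : Fin 6) (x : Fin 5 → ℝ) :
    b.coord j x = b.coord j 0 + ∑ i, x i * (b.coord j).linear (ee i) := by
  have h0 : b.coord j x = (b.coord j).linear x + b.coord j 0 := by
    have := coord_add b j x 0
    simpa using this
  rw [h0, LinearMap.pi_apply_eq_sum_univ ((b.coord j).linear) x, add_comm]
  rfl

lemma sum_linear (i : Fin 5) : ∑ j, (b.coord j).linear (ee i) = 0 := by
  have h1 : ∑ j, b.coord j (ee i + 0) = 1 := by
    simpa using b.sum_coord_apply_eq_one (ee i + 0)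
  have h0 : ∑ j, b.coord j 0 = 1 := b.sum_coord_apply_eq_one 0
  have h2 : ∀ j : Fin 6, b.coord j (ee i + 0) = (b.coord j).linear (ee i) + b.coord j 0 :=
    fun j => coord_add b j (ee i) 0
  rw [Finset.sum_congr rfl (fun j _ => h2 j), Finset.sum_add_distrib, h0] at h1
  linarith

lemma sum_linear_smul (i : Fin 5) :
    ∑ j, (b.coord j).linear (ee i) • b j = ee i := by
  have h1 : ∑ j, b.coord j (ee i + 0) • b j = ee i + 0 := repro b _
  have h2 : ∀ j : Fin 6, b.coord j (ee i + 0) • b j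
      = (b.coord j).linear (ee i) • b j + b.coord j 0 • b j := by
    intro j; rw [coord_add, add_smul]
  rw [Finset.sum_congr rfl (fun j _ => h2 j), Finset.sum_add_distrib, repro b 0] at h1
  simpa using h1

lemma coord_homothety (j : Fin 6) (σ : ℝ) (z : Fin 5 → ℝ) :
    b.coord j (simplexCentroid ⇑b + σ • (z - simplexCentroid ⇑b))
      = 6⁻¹ + σ * (b.coord j z - 6⁻¹) := by
  rw [add_comm, coord_add, LinearMap.map_smul, smul_eq_mul, centroid_coord]
  have h : (b.coord j).linear (z - simplexCentroid ⇑b) = b.coord j z - 6⁻¹ := by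
    have h2 : z - simplexCentroid ⇑b = z -ᵥ simplexCentroid ⇑b := rfl
    rw [h2, (b.coord j).linearMap_vsub, vsub_eq_sub, centroid_coord]
  rw [h]; ring

lemma mem_hom_iff {σ : ℝ} (hσ : 0 < σ) (x : Fin 5 → ℝ) :
    x ∈ homSimplex (⇑b) σ ↔ ∀ j, (1 - σ)/6 ≤ b.coord j x := by
  constructor
  · rintro ⟨z, hz, rfl⟩ j
    have hz' : 0 ≤ b.coord j z := by
      rw [simplexSet, b.convexHull_eq_nonneg_coord] at hz
      exact hz j
    rw [coord_homothety]
    nlinarith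
  · intro h
    refine ⟨simplexCentroid ⇑b + σ⁻¹ • (x - simplexCentroid ⇑b), ?_, ?_⟩
    · rw [simplexSet, b.convexHull_eq_nonneg_coord]
      intro j
      rw [coord_homothety]
      have := h j
      have hσ' : σ⁻¹ * ((1-σ)/6 - 6⁻¹) ≤ σ⁻¹ * (b.coord j x - 6⁻¹) := by
        apply mul_le_mul_of_nonneg_left _ (le_of_lt (inv_pos.mpr hσ))
        linarith
      have he : σ⁻¹ * ((1-σ)/6 - 6⁻¹) = -6⁻¹ := by
        field_simp
        ring
      rw [he] at hσ'
      linarith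
    · show simplexCentroid ⇑b +
          σ • (simplexCentroid ⇑b + σ⁻¹ • (x - simplexCentroid ⇑b) - simplexCentroid ⇑b) = x
      rw [add_sub_cancel_left, smul_smul, mul_inv_cancel₀ (ne_of_gt hσ), one_smul]
      abel


lemma max_split (a : ℝ) : max a 0 = max (-a) 0 + a := by
  rcases le_total 0 a with h | h
  · rw [max_eq_left h, max_eq_right (by linarith)]; ring
  · rw [max_eq_right h, max_eq_left (by linarith)]; ring

lemma axial (hsub : simplexSet ⇑b ⊆ unitCube 5) (i : Fin 5) :
    1 ≤ ∑ j, max (-((b.coord j).linear (ee i))) 0 := by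
  set l : Fin 6 → ℝ := fun j => (b.coord j).linear (ee i) with hl
  have hsum0 : ∑ j, l j = 0 := sum_linear b i
  have hrepe : ∑ j, l j • b j = ee i := sum_linear_smul b i
  set s : ℝ := ∑ j, |l j| with hs
  have habs : ∑ j, max (-(l j)) 0 = s / 2 := by
    calc ∑ j, max (-(l j)) 0 = ∑ j, (|l j| - l j)/2 :=
          Finset.sum_congr rfl (fun j _ => max_neg_eq _)
      _ = ((∑ j, |l j|) - ∑ j, l j)/2 := by
          rw [← Finset.sum_div, Finset.sum_sub_distrib]
      _ = s / 2 := by rw [hsum0, ← hs, sub_zero]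
  have habs' : ∑ j, max (l j) 0 = s / 2 := by
    calc ∑ j, max (l j) 0 = ∑ j, (|l j| + l j)/2 :=
          Finset.sum_congr rfl (fun j _ => max_pos_eq _)
      _ = ((∑ j, |l j|) + ∑ j, l j)/2 := by
          rw [← Finset.sum_div, Finset.sum_add_distrib]
      _ = s / 2 := by rw [hsum0, ← hs, add_zero]
  have hsnn : 0 ≤ s := Finset.sum_nonneg (fun j _ => abs_nonneg _)
  have hspos : 0 < s := by
    rcases eq_or_lt_of_le hsnn with h | h
    · exfalso
      have hz : ∀ j ∈ (Finset.univ : Finset (Fin 6)), |l j| = 0 :=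
        (Finset.sum_eq_zero_iff_of_nonneg (fun j _ => abs_nonneg _)).mp h.symm
      have h0 : ee i = 0 := by
        rw [← hrepe]
        apply Finset.sum_eq_zero
        intro j hj
        rw [abs_eq_zero.mp (hz j hj), zero_smul]
      have h1 : ee i i = 1 := by simp [ee]
      rw [h0] at h1
      simpa using h1
    · exact h
  set t : ℝ := 2 / s with ht
  have htpos : 0 < t := by positivity
  have hysum : ∑ j, t * max (-(l j)) 0 = 1 := by
    rw [← Finset.mul_sum, habs, ht]; field_simp
  have hy'sum : ∑ j, t * max (l j) 0 = 1 := by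
    rw [← Finset.mul_sum, habs', ht]; field_simp
  have hconv : Convex ℝ (simplexSet ⇑b) := convex_convexHull _ _
  have hymem : (∑ j, (t * max (-(l j)) 0) • b j) ∈ simplexSet ⇑b :=
    hconv.sum_mem (fun j _ => by positivity) hysum
      (fun j _ => subset_convexHull ℝ _ ⟨j, rfl⟩)
  have hy'mem : (∑ j, (t * max (l j) 0) • b j) ∈ simplexSet ⇑b :=
    hconv.sum_mem (fun j _ => by positivity) hy'sum
      (fun j _ => subset_convexHull ℝ _ ⟨j, rfl⟩)
  have hdiff : (∑ j, (t * max (l j) 0) • b j)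
      = (∑ j, (t * max (-(l j)) 0) • b j) + t • ee i := by
    rw [← hrepe, Finset.smul_sum, ← Finset.sum_add_distrib]
    apply Finset.sum_congr rfl
    intro j _
    rw [smul_smul, ← add_smul]
    congr 1
    rw [max_split]
    ring
  have hyc := hsub hymem
  have hy'c := hsub hy'mem
  have h1 : (∑ j, (t * max (l j) 0) • b j) i
      = (∑ j, (t * max (-(l j)) 0) • b j) i + t := by
    rw [hdiff]
    have : (t • ee i) i = t := by simp [ee]
    simp only [Pi.add_apply, Pi.smul_apply, smul_eq_mul]
    simp [ee]
  have hy0 := (hyc i).1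
  have hy1 := (hy'c i).2
  have hts : t ≤ 1 := by linarith
  have h2s : 2 ≤ s := by rwa [ht, div_le_one hspos] at hts
  rw [habs]
  linarith

lemma member_bound (hsub : simplexSet ⇑b ⊆ unitCube 5) (σ : ℝ) (hσ1 : 1 ≤ σ)
    (hσ2 : unitCube 5 ⊆ homSimplex ⇑b σ) : 5 ≤ σ := by
  have hσ0 : (0:ℝ) < σ := by linarith
  set l : Fin 6 → Fin 5 → ℝ := fun j i => (b.coord j).linear (ee i) with hl
  have hzc : ∀ j : Fin 6, (fun i => if l j i < 0 then (1:ℝ) else 0) ∈ unitCube 5 := by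
    intro j i
    by_cases h : l j i < 0 <;> simp [h]
  have hcz : ∀ j : Fin 6, b.coord j (fun i => if l j i < 0 then (1:ℝ) else 0)
      = b.coord j 0 - ∑ i, max (-(l j i)) 0 := by
    intro j
    rw [coord_eval b j]
    have hterm : ∀ i : Fin 5, (if l j i < 0 then (1:ℝ) else 0) * (b.coord j).linear (ee i)
        = -(max (-(l j i)) 0) := by
      intro i
      by_cases h : l j i < 0
      · simp only [h, if_true, one_mul]
        rw [max_eq_left (by simp only [hl]; linarith)]
        simp [hl]
      · push_neg at h
        simp only [h.not_gt, if_false, zero_mul]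
        rw [max_eq_right (by simp only [hl]; linarith)]
        simp
    rw [Finset.sum_congr rfl (fun i _ => hterm i)]
    rw [Finset.sum_neg_distrib]
    ring
  have hge : ∀ j : Fin 6, (1 - σ)/6 ≤ b.coord j (fun i => if l j i < 0 then (1:ℝ) else 0) := by
    intro j
    exact (mem_hom_iff b hσ0 _).mp (hσ2 (hzc j)) j
  have hsum : ∑ j, b.coord j (fun i => if l j i < 0 then (1:ℝ) else 0)
      = 1 - ∑ j, ∑ i, max (-(l j i)) 0 := by
    rw [Finset.sum_congr rfl (fun j _ => hcz j), Finset.sum_sub_distrib,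
      b.sum_coord_apply_eq_one 0]
  have hswap : ∑ j, ∑ i : Fin 5, max (-(l j i)) 0
      = ∑ i : Fin 5, ∑ j, max (-(l j i)) 0 := Finset.sum_comm
  have hge5 : (5:ℝ) ≤ ∑ i : Fin 5, ∑ j, max (-(l j i)) 0 := by
    calc (5:ℝ) = ∑ _i : Fin 5, (1:ℝ) := by simp
      _ ≤ _ := Finset.sum_le_sum (fun i _ => axial b hsub i)
  have hlow : 1 - σ ≤ ∑ j, b.coord j (fun i => if l j i < 0 then (1:ℝ) else 0) := by
    calc 1 - σ = ∑ _j : Fin 6, (1-σ)/6 := by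
          rw [Finset.sum_const]
          simp
          ring
      _ ≤ _ := Finset.sum_le_sum (fun j _ => hge j)
  rw [hsum, hswap] at hlow
  linarith

lemma exists_member : ∃ σ0 : ℝ, 1 ≤ σ0 ∧ unitCube 5 ⊆ homSimplex ⇑b σ0 := by
  set l : Fin 6 → Fin 5 → ℝ := fun j i => (b.coord j).linear (ee i) with hl
  set C : ℝ := ∑ j, (|b.coord j 0| + ∑ i, |l j i|) with hC
  have hC0 : 0 ≤ C := Finset.sum_nonneg (fun j _ => by positivity)
  have hCj : ∀ j : Fin 6, |b.coord j 0| + ∑ i, |l j i| ≤ C := fun j =>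
    Finset.single_le_sum (f := fun j => |b.coord j 0| + ∑ i, |l j i|)
      (fun j _ => by positivity) (Finset.mem_univ j)
  refine ⟨1 + 6 * C, by linarith, ?_⟩
  intro x hx
  rw [mem_hom_iff b (by linarith)]
  intro j
  rw [coord_eval b j x]
  have hterm : ∀ i ∈ (Finset.univ : Finset (Fin 5)),
      -(|l j i|) ≤ x i * (b.coord j).linear (ee i) := by
    intro i _
    have hxi := hx i
    rcases le_total 0 (l j i) with h | h
    · rw [abs_of_nonneg h]
      have h2 : 0 ≤ x i * l j i := mul_nonneg hxi.1 h
      have h3 : -(l j i) ≤ 0 := by linarith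
      simp only [hl] at h2 ⊢
      linarith
    · rw [abs_of_nonpos h]
      have h2 : 0 ≤ (1 - x i) * (-(l j i)) :=
        mul_nonneg (by linarith [hxi.2]) (by linarith)
      simp only [hl] at h2 ⊢
      nlinarith
  have h1 : -(∑ i, |l j i|) ≤ ∑ i, x i * (b.coord j).linear (ee i) := by
    rw [← Finset.sum_neg_distrib]
    exact Finset.sum_le_sum hterm
  have h2 : -(|b.coord j 0|) ≤ b.coord j 0 := neg_abs_le _
  have h3 := hCj j
  have h4 : (1 - (1 + 6 * C))/6 = -C := by ring
  rw [h4]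
  have habs : 0 ≤ |b.coord j 0| := abs_nonneg _
  linarith

end XiAux

lemma part2 (w : Fin 6 → (Fin 5 → ℝ)) (hw : AffineIndependent ℝ w)
    (hsub : simplexSet w ⊆ unitCube 5) : (5:ℝ) ≤ xiVal w := by
  have htop : affineSpan ℝ (Set.range w) = ⊤ := by
    rw [hw.affineSpan_eq_top_iff_card_eq_finrank_add_one]
    simp
  let b : AffineBasis (Fin 6) ℝ (Fin 5 → ℝ) := ⟨w, hw, htop⟩
  have hb : ⇑b = w := rfl
  have hsub' : simplexSet ⇑b ⊆ unitCube 5 := by rw [hb]; exact hsub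
  obtain ⟨σ0, hσ01, hσ0sub⟩ := XiAux.exists_member b
  rw [hb] at hσ0sub
  have hne : {σ : ℝ | 1 ≤ σ ∧ unitCube 5 ⊆ homSimplex w σ}.Nonempty :=
    ⟨σ0, hσ01, hσ0sub⟩
  apply le_csInf hne
  rintro σ ⟨hσ1, hσ2⟩
  exact XiAux.member_bound b hsub' σ hσ1 (by rw [hb]; exact hσ2)

namespace XiPart1

@[simp] lemma cons_val_five {α : Type*} {m : ℕ} (x : α) (u : Fin (m+5) → α) :
    Matrix.vecCons x u 5
      = Matrix.vecHead (Matrix.vecTail (Matrix.vecTail (Matrix.vecTail (Matrix.vecTail u)))) :=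
  rfl

noncomputable def vv : Fin 6 → (Fin 5 → ℝ) :=
  ![![0, 0, 1/2, 0, 2/3],
    ![1, 0, 0, 1, 0],
    ![0, 1/2, 1, 1, 2/3],
    ![1, 1, 1, 0, 0],
    ![1, 1/2, 1/2, 1/2, 1],
    ![0, 1, 0, 1/2, 2/3]]

noncomputable def aa : Fin 6 → (Fin 5 → ℝ) :=
  ![![-1/3, -2/3, 0, -2/3, 0],
    ![1/6, -1/3, -1/3, 1/3, -1/2],
    ![-1/3, 0, 2/3, 2/3, 0],
    ![1/6, 1/3, 1/3, -1/3, -1/2],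
    ![2/3, 0, 0, 0, 1],
    ![-1/3, 2/3, -2/3, 0, 0]]

noncomputable def bb : Fin 6 → ℝ := ![1, 1/2, -1/3, 1/6, -2/3, 1/3]

noncomputable def lam (j : Fin 6) (x : Fin 5 → ℝ) : ℝ := ∑ i, aa j i * x i + bb j

lemma lam_vertex (j k : Fin 6) : lam j (vv k) = if j = k then 1 else 0 := by
  fin_cases j <;> fin_cases k <;>
    norm_num [lam, vv, aa, bb, Fin.sum_univ_five, Matrix.cons_val_succ, Matrix.cons_val_two, Matrix.cons_val_three, Matrix.cons_val_four, Matrix.vecHead, Matrix.vecTail, Fin.ext_iff]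

lemma hAI : AffineIndependent ℝ vv := by
  rw [affineIndependent_iff_of_fintype]
  intro c hc0 hcomb
  have h : ∑ j, c j • vv j = 0 := by
    rw [← Finset.weightedVSub_eq_linear_combination _ hc0]
    exact hcomb
  have hi : ∀ i : Fin 5, ∑ j, c j * vv j i = 0 := by
    intro i
    have := congrFun h i
    simpa using this
  have h0 := hi 0
  have h1 := hi 1
  have h2 := hi 2
  have h3 := hi 3
  have h4 := hi 4
  simp only [Fin.sum_univ_six] at h0 h1 h2 h3 h4 hc0
  norm_num [vv, Matrix.cons_val_succ, Matrix.cons_val_two, Matrix.cons_val_three, Matrix.cons_val_four, Matrix.vecHead, Matrix.vecTail] at h0 h1 h2 h3 h4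
  intro k
  fin_cases k <;>
    first
      | (show c 0 = 0; linarith)
      | (show c 1 = 0; linarith)
      | (show c 2 = 0; linarith)
      | (show c 3 = 0; linarith)
      | (show c 4 = 0; linarith)
      | (show c 5 = 0; linarith)

end XiPart1

namespace XiPart1

lemma cube_convex : Convex ℝ (unitCube 5) := by
  have h : unitCube 5 = Set.Icc (0 : Fin 5 → ℝ) 1 := by
    ext x
    simp [unitCube, Set.mem_Icc, Pi.le_def, forall_and]
  rw [h]
  exact convex_Icc _ _

lemma coord_eq (b : AffineBasis (Fin 6) ℝ (Fin 5 → ℝ)) (hb : ⇑b = vv) (k : Fin 6)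
    (x : Fin 5 → ℝ) : b.coord k x = lam k x := by
  have hrep := XiAux.repro b x
  rw [hb] at hrep
  have hone := b.sum_coord_apply_eq_one x
  have hi : ∀ i : Fin 5, ∑ j, b.coord j x * vv j i = x i := by
    intro i
    have := congrFun hrep i
    simpa using this
  have h0 := hi 0
  have h1 := hi 1
  have h2 := hi 2
  have h3 := hi 3
  have h4 := hi 4
  simp only [Fin.sum_univ_six] at h0 h1 h2 h3 h4 hone
  norm_num [vv, Matrix.cons_val_succ, Matrix.cons_val_two, Matrix.cons_val_three, Matrix.cons_val_four, Matrix.vecHead, Matrix.vecTail] at h0 h1 h2 h3 h4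
  fin_cases k <;>
    first
      | (show b.coord 0 x = lam 0 x
         norm_num [lam, aa, bb, Fin.sum_univ_five, Matrix.cons_val_succ, Matrix.cons_val_two, Matrix.cons_val_three, Matrix.cons_val_four, Matrix.vecHead,
           Matrix.vecTail]
         linarith)
      | (show b.coord 1 x = lam 1 x
         norm_num [lam, aa, bb, Fin.sum_univ_five, Matrix.cons_val_succ, Matrix.cons_val_two, Matrix.cons_val_three, Matrix.cons_val_four, Matrix.vecHead,
           Matrix.vecTail]
         linarith)
      | (show b.coord 2 x = lam 2 x
         norm_num [lam, aa, bb, Fin.sum_univ_five, Matrix.cons_val_succ, Matrix.cons_val_two, Matrix.cons_val_three, Matrix.cons_val_four, Matrix.vecHead,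
           Matrix.vecTail]
         linarith)
      | (show b.coord 3 x = lam 3 x
         norm_num [lam, aa, bb, Fin.sum_univ_five, Matrix.cons_val_succ, Matrix.cons_val_two, Matrix.cons_val_three, Matrix.cons_val_four, Matrix.vecHead,
           Matrix.vecTail]
         linarith)
      | (show b.coord 4 x = lam 4 x
         norm_num [lam, aa, bb, Fin.sum_univ_five, Matrix.cons_val_succ, Matrix.cons_val_two, Matrix.cons_val_three, Matrix.cons_val_four, Matrix.vecHead,
           Matrix.vecTail]
         linarith)
      | (show b.coord 5 x = lam 5 x
         norm_num [lam, aa, bb, Fin.sum_univ_five, Matrix.cons_val_succ, Matrix.cons_val_two, Matrix.cons_val_three, Matrix.cons_val_four, Matrix.vecHead,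
           Matrix.vecTail]
         linarith)

lemma lam_lb (x : Fin 5 → ℝ) (hx : x ∈ unitCube 5) (j : Fin 6) : -(2/3 : ℝ) ≤ lam j x := by
  have hx' : ∀ i, 0 ≤ x i ∧ x i ≤ 1 := hx
  obtain ⟨a0, b0⟩ := hx' 0
  obtain ⟨a1, b1⟩ := hx' 1
  obtain ⟨a2, b2⟩ := hx' 2
  obtain ⟨a3, b3⟩ := hx' 3
  obtain ⟨a4, b4⟩ := hx' 4
  fin_cases j <;>
    first
      | (show -(2/3 : ℝ) ≤ lam 0 x
         norm_num [lam, aa, bb, Fin.sum_univ_five, Matrix.cons_val_succ, Matrix.cons_val_two, Matrix.cons_val_three, Matrix.cons_val_four, Matrix.vecHead,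
           Matrix.vecTail]
         linarith)
      | (show -(2/3 : ℝ) ≤ lam 1 x
         norm_num [lam, aa, bb, Fin.sum_univ_five, Matrix.cons_val_succ, Matrix.cons_val_two, Matrix.cons_val_three, Matrix.cons_val_four, Matrix.vecHead,
           Matrix.vecTail]
         linarith)
      | (show -(2/3 : ℝ) ≤ lam 2 x
         norm_num [lam, aa, bb, Fin.sum_univ_five, Matrix.cons_val_succ, Matrix.cons_val_two, Matrix.cons_val_three, Matrix.cons_val_four, Matrix.vecHead,
           Matrix.vecTail]
         linarith)
      | (show -(2/3 : ℝ) ≤ lam 3 x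
         norm_num [lam, aa, bb, Fin.sum_univ_five, Matrix.cons_val_succ, Matrix.cons_val_two, Matrix.cons_val_three, Matrix.cons_val_four, Matrix.vecHead,
           Matrix.vecTail]
         linarith)
      | (show -(2/3 : ℝ) ≤ lam 4 x
         norm_num [lam, aa, bb, Fin.sum_univ_five, Matrix.cons_val_succ, Matrix.cons_val_two, Matrix.cons_val_three, Matrix.cons_val_four, Matrix.vecHead,
           Matrix.vecTail]
         linarith)
      | (show -(2/3 : ℝ) ≤ lam 5 x
         norm_num [lam, aa, bb, Fin.sum_univ_five, Matrix.cons_val_succ, Matrix.cons_val_two, Matrix.cons_val_three, Matrix.cons_val_four, Matrix.vecHead,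
           Matrix.vecTail]
         linarith)

lemma part1 : AffineIndependent ℝ vv ∧ simplexSet vv ⊆ unitCube 5 ∧
    unitCube 5 ⊆ homSimplex vv 5 := by
  refine ⟨hAI, ?_, ?_⟩
  · apply convexHull_min ?_ cube_convex
    rintro y ⟨j, rfl⟩ i
    fin_cases j <;> fin_cases i <;>
      norm_num [vv, Matrix.cons_val_succ, Matrix.vecHead, Matrix.vecTail]
  · have htop : affineSpan ℝ (Set.range vv) = ⊤ := by
      rw [hAI.affineSpan_eq_top_iff_card_eq_finrank_add_one]
      simp
    let b : AffineBasis (Fin 6) ℝ (Fin 5 → ℝ) := ⟨vv, hAI, htop⟩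
    have hb : ⇑b = vv := rfl
    intro x hx
    have hmem : x ∈ homSimplex (⇑b) 5 := by
      rw [XiAux.mem_hom_iff b (by norm_num)]
      intro j
      rw [coord_eq b hb j x]
      have := lam_lb x hx j
      linarith
    rwa [hb] at hmem

end XiPart1

/-- `ξ₅ = 5`: there is a nondegenerate simplex `S ⊆ [0,1]⁵` with
`[0,1]⁵ ⊆ 5S`, and every nondegenerate simplex `T ⊆ [0,1]⁵` has `ξ(T) ≥ 5`. -/
theorem xi_5_eq_5 :
    (∃ v : Fin 6 → (Fin 5 → ℝ), AffineIndependent ℝ v ∧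
      simplexSet v ⊆ unitCube 5 ∧ unitCube 5 ⊆ homSimplex v 5) ∧
    (∀ w : Fin 6 → (Fin 5 → ℝ), AffineIndependent ℝ w →
      simplexSet w ⊆ unitCube 5 → (5 : ℝ) ≤ xiVal w) :=
  ⟨⟨XiPart1.vv, XiPart1.part1⟩, fun w hw hs => part2 w hw hs⟩
end

section
/- For t ∈ [1/4, 3/4], the simplex T(t) ⊂ R⁷ with vertices (1,0,0,0,0,0,1), (1,0,1,t,1,1,0), (0,1,1,1−t,0,1,1), (0,0,0,t,1,1,0), (0,1,1,1−t,0,0,0), (1,1,0,t,1,1,0), (0,1,1,1−t,1,0,1), (1,0,0,1,0,0,1) is nondegenerate, contained in Q₇ = [0,1]⁷, and satisfies ξ(T(t)) = 7 (so that the simplex 7T(t) is circumscribed around Q₇). -/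
open Finset MeasureTheory

/-- The family of simplices `T(t) ⊂ ℝ⁷`. -/
noncomputable def Tverts (t : ℝ) : Fin 8 → (Fin 7 → ℝ) :=
  ![![1, 0, 0, 0, 0, 0, 1], ![1, 0, 1, t, 1, 1, 0], ![0, 1, 1, 1 - t, 0, 1, 1],
    ![0, 0, 0, t, 1, 1, 0], ![0, 1, 1, 1 - t, 0, 0, 0], ![1, 1, 0, t, 1, 1, 0],
    ![0, 1, 1, 1 - t, 1, 0, 1], ![1, 0, 0, 1, 0, 0, 1]]

/- ===== auxiliary material ===== -/

lemma cv5 {α : Type*} {m : ℕ} (x : α) (u : Fin (m+5) → α) :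
    Matrix.vecCons x u 5 =
    Matrix.vecHead (Matrix.vecTail (Matrix.vecTail (Matrix.vecTail (Matrix.vecTail u)))) := rfl

lemma cv6 {α : Type*} {m : ℕ} (x : α) (u : Fin (m+6) → α) :
    Matrix.vecCons x u 6 =
    Matrix.vecHead (Matrix.vecTail (Matrix.vecTail (Matrix.vecTail (Matrix.vecTail
      (Matrix.vecTail u))))) := rfl

lemma cv7 {α : Type*} {m : ℕ} (x : α) (u : Fin (m+7) → α) :
    Matrix.vecCons x u 7 =
    Matrix.vecHead (Matrix.vecTail (Matrix.vecTail (Matrix.vecTail (Matrix.vecTail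
      (Matrix.vecTail (Matrix.vecTail u)))))) := rfl

/-- The Lagrange basis polynomials of `Tverts t`. -/
noncomputable def Lag (t : ℝ) : Fin 8 → (Fin 7 → ℝ) → ℝ :=
  ![fun x => ((4*t-1)*(x 0 - x 1 - x 2) + (4*t-3)*(x 4 + x 5) + (3-4*t)*(x 6))/8 - x 3 + 3/4,
    fun x => (3*x 0 - 3*x 1 + 5*x 2 + x 4 + x 5 - x 6)/8 - 1/4,
    fun x => (-x 0 + x 1 + x 2 - 3*x 4 + 5*x 5 + 3*x 6)/8 - 1/4,
    fun x => (-5*x 0 - 3*x 1 - 3*x 2 + x 4 + x 5 - x 6)/8 + 3/4,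
    fun x => (-x 0 + x 1 + x 2 - 3*x 4 - 3*x 5 - 5*x 6)/8 + 3/4,
    fun x => (3*x 0 + 5*x 1 - 3*x 2 + x 4 + x 5 - x 6)/8 - 1/4,
    fun x => (-x 0 + x 1 + x 2 + 5*x 4 - 3*x 5 + 3*x 6)/8 - 1/4,
    fun x => ((3-4*t)*(x 0 - x 1 - x 2) + (1-4*t)*(x 4 + x 5) + (4*t-1)*(x 6))/8 + x 3 - 1/4]

set_option maxHeartbeats 2000000 in
lemma lag_vertex (t : ℝ) (j k : Fin 8) : Lag t j (Tverts t k) = if j = k then 1 else 0 := by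
  fin_cases j <;> fin_cases k <;>
    simp [Lag, Tverts, cv5, cv6, cv7, Matrix.vecHead, Matrix.vecTail] <;> ring

set_option maxHeartbeats 1000000 in
lemma lag_affine (t : ℝ) (j : Fin 8) (p q : Fin 7 → ℝ) (a b : ℝ) (hab : a + b = 1) :
    Lag t j (a • p + b • q) = a * Lag t j p + b * Lag t j q := by
  fin_cases j <;>
    simp [Lag, cv5, cv6, cv7, Matrix.vecHead, Matrix.vecTail] <;>
    first
      | linear_combination (-3/4 : ℝ) * hab
      | linear_combination (1/4 : ℝ) * hab
      | linear_combination (3/4 : ℝ) * hab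
      | linear_combination (-1/4 : ℝ) * hab

lemma lag_nonneg (t : ℝ) (j : Fin 8) : ∀ y ∈ simplexSet (Tverts t), 0 ≤ Lag t j y := by
  intro y hy
  have h : simplexSet (Tverts t) ⊆ {y | 0 ≤ Lag t j y} := by
    refine convexHull_min ?_ ?_
    · rintro _ ⟨k, rfl⟩
      show 0 ≤ Lag t j (Tverts t k)
      rw [lag_vertex]
      split <;> norm_num
    · intro p hp q hq a b ha hb hab
      show 0 ≤ Lag t j (a • p + b • q)
      rw [lag_affine t j p q a b hab]
      have h1 := mul_nonneg ha hp
      have h2 := mul_nonneg hb hq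
      linarith
  exact h hy

set_option maxHeartbeats 1000000 in
lemma lag_cube_lb (t : ℝ) (ht : t ∈ Set.Icc (1/4 : ℝ) (3/4)) (x : Fin 7 → ℝ)
    (hx : x ∈ unitCube 7) (j : Fin 8) : -(3/4) ≤ Lag t j x := by
  obtain ⟨ht1, ht2⟩ := ht
  have h0 := hx 0; have h1 := hx 1; have h2 := hx 2; have h3 := hx 3
  have h4 := hx 4; have h5 := hx 5; have h6 := hx 6
  have hA : (0:ℝ) ≤ 4*t - 1 := by linarith
  have hB : (0:ℝ) ≤ 3 - 4*t := by linarith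
  fin_cases j <;>
    simp [Lag, cv5, cv6, cv7, Matrix.vecHead, Matrix.vecTail]
  · nlinarith [mul_nonneg hA h0.1, mul_nonneg hA (by linarith [h1.2] : (0:ℝ) ≤ 1 - x 1),
      mul_nonneg hA (by linarith [h2.2] : (0:ℝ) ≤ 1 - x 2),
      mul_nonneg hB (by linarith [h4.2] : (0:ℝ) ≤ 1 - x 4),
      mul_nonneg hB (by linarith [h5.2] : (0:ℝ) ≤ 1 - x 5),
      mul_nonneg hB h6.1]
  · linarith
  · linarith
  · linarith
  · linarith
  · linarith
  · linarith
  · nlinarith [mul_nonneg hB h0.1, mul_nonneg hB (by linarith [h1.2] : (0:ℝ) ≤ 1 - x 1),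
      mul_nonneg hB (by linarith [h2.2] : (0:ℝ) ≤ 1 - x 2),
      mul_nonneg hA (by linarith [h4.2] : (0:ℝ) ≤ 1 - x 4),
      mul_nonneg hA (by linarith [h5.2] : (0:ℝ) ≤ 1 - x 5),
      mul_nonneg hA h6.1]

lemma tcentroid (t : ℝ) : simplexCentroid (Tverts t) = fun _ => (1/2 : ℝ) := by
  funext i
  simp only [simplexCentroid, Pi.smul_apply, Finset.sum_apply, smul_eq_mul]
  fin_cases i <;>
    simp [Tverts, Fin.sum_univ_eight, cv5, cv6, cv7, Matrix.vecHead, Matrix.vecTail] <;>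
    ring_nf <;>
    norm_num

lemma tvert_cube (t : ℝ) (ht : t ∈ Set.Icc (1/4 : ℝ) (3/4)) (k : Fin 8) :
    Tverts t k ∈ unitCube 7 := by
  obtain ⟨ht1, ht2⟩ := ht
  intro i
  fin_cases k <;> fin_cases i <;>
    simp [Tverts, cv5, cv6, cv7, Matrix.vecHead, Matrix.vecTail] <;>
    constructor <;> linarith

lemma cube_convex : Convex ℝ (unitCube 7) := by
  intro x hx y hy a b ha hb hab i
  have h1 := (hx i).1; have h2 := (hx i).2
  have h3 := (hy i).1; have h4 := (hy i).2
  simp only [Pi.add_apply, Pi.smul_apply, smul_eq_mul]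
  constructor <;> nlinarith

set_option maxHeartbeats 4000000 in
/-- for `t ∈ [1/4, 3/4]`, `T(t)` is nondegenerate, contained in `Q₇`, and
`ξ(T(t)) = 7` (so `7T(t)` is circumscribed around `Q₇`). -/
theorem Tt_extremal (t : ℝ) (ht : t ∈ Set.Icc (1/4 : ℝ) (3/4)) :
    AffineIndependent ℝ (Tverts t) ∧
    simplexSet (Tverts t) ⊆ unitCube 7 ∧
    xiVal (Tverts t) = 7 := by
  have hc := tcentroid t
  -- containment in the cube
  have hsub : simplexSet (Tverts t) ⊆ unitCube 7 :=
    convexHull_min (by rintro _ ⟨k, rfl⟩; exact tvert_cube t ht k) cube_convex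
  -- affine independence
  have hai : AffineIndependent ℝ (Tverts t) := by
    rw [affineIndependent_iff_of_fintype]
    intro w hw0 hwv
    rw [Finset.univ.weightedVSub_eq_linear_combination hw0] at hwv
    have hE : ∀ i : Fin 7, w 0 * Tverts t 0 i + w 1 * Tverts t 1 i + w 2 * Tverts t 2 i
        + w 3 * Tverts t 3 i + w 4 * Tverts t 4 i + w 5 * Tverts t 5 i + w 6 * Tverts t 6 i
        + w 7 * Tverts t 7 i = 0 := by
      intro i
      have h := congrFun hwv i
      simpa [Fin.sum_univ_eight] using h
    have E0 := hE 0; have E1 := hE 1; have E2 := hE 2; have E3 := hE 3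
    have E4 := hE 4; have E5 := hE 5; have E6 := hE 6
    simp [Tverts, cv5, cv6, cv7, Matrix.vecHead, Matrix.vecTail] at E0 E1 E2 E3 E4 E5 E6
    have S8 := hw0
    rw [Fin.sum_univ_eight] at S8
    intro j
    fin_cases j
    · show w 0 = 0
      linear_combination ((4*t-1)/8)*E0 - ((4*t-1)/8)*E1 - ((4*t-1)/8)*E2 - E3
        + ((4*t-3)/8)*E4 + ((4*t-3)/8)*E5 + ((3-4*t)/8)*E6 + (3/4)*S8
    · show w 1 = 0
      linear_combination (3/8)*E0 - (3/8)*E1 + (5/8)*E2 + (1/8)*E4 + (1/8)*E5 - (1/8)*E6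
        - (1/4)*S8
    · show w 2 = 0
      linear_combination (-1/8)*E0 + (1/8)*E1 + (1/8)*E2 - (3/8)*E4 + (5/8)*E5 + (3/8)*E6
        - (1/4)*S8
    · show w 3 = 0
      linear_combination (-5/8)*E0 - (3/8)*E1 - (3/8)*E2 + (1/8)*E4 + (1/8)*E5 - (1/8)*E6
        + (3/4)*S8
    · show w 4 = 0
      linear_combination (-1/8)*E0 + (1/8)*E1 + (1/8)*E2 - (3/8)*E4 - (3/8)*E5 - (5/8)*E6
        + (3/4)*S8
    · show w 5 = 0
      linear_combination (3/8)*E0 + (5/8)*E1 - (3/8)*E2 + (1/8)*E4 + (1/8)*E5 - (1/8)*E6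
        - (1/4)*S8
    · show w 6 = 0
      linear_combination (-1/8)*E0 + (1/8)*E1 + (1/8)*E2 + (5/8)*E4 - (3/8)*E5 + (3/8)*E6
        - (1/4)*S8
    · show w 7 = 0
      linear_combination ((3-4*t)/8)*E0 - ((3-4*t)/8)*E1 - ((3-4*t)/8)*E2 + E3
        + ((1-4*t)/8)*E4 + ((1-4*t)/8)*E5 + ((4*t-1)/8)*E6 - (1/4)*S8
  -- 7 belongs to the defining set of ξ
  have h7mem : (7:ℝ) ∈ {σ : ℝ | 1 ≤ σ ∧ unitCube 7 ⊆ homSimplex (Tverts t) σ} := by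
    refine ⟨by norm_num, ?_⟩
    intro x hx
    set μ : Fin 8 → ℝ := fun j => Lag t j x / 7 + 3/28 with hμ
    have hμ0 : ∀ j ∈ Finset.univ, 0 ≤ μ j := by
      intro j _
      have := lag_cube_lb t ht x hx j
      simp only [hμ]
      linarith
    have hμsum : ∑ j, μ j = 1 := by
      rw [Fin.sum_univ_eight]
      simp [hμ, Lag, cv5, cv6, cv7, Matrix.vecHead, Matrix.vecTail]
      ring
    refine ⟨fun i => x i / 7 + 3/7, ?_, ?_⟩
    · have hy : (fun i => x i / 7 + 3/7) = Finset.univ.centerMass μ (Tverts t) := by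
        rw [Finset.centerMass_eq_of_sum_1 _ _ hμsum]
        funext i
        rw [Finset.sum_apply]
        rw [Fin.sum_univ_eight]
        simp only [Pi.smul_apply, smul_eq_mul]
        fin_cases i <;>
          simp [hμ, Lag, Tverts, cv5, cv6, cv7, Matrix.vecHead, Matrix.vecTail] <;> ring
      rw [simplexSet, hy]
      exact Finset.centerMass_mem_convexHull _ hμ0 (by rw [hμsum]; norm_num)
        (fun j _ => Set.mem_range_self j)
    · funext i
      simp only [hc, Pi.add_apply, Pi.smul_apply, Pi.sub_apply, smul_eq_mul]
      ring
  -- every admissible σ is at least 7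
  have hlb : ∀ σ ∈ {σ : ℝ | 1 ≤ σ ∧ unitCube 7 ⊆ homSimplex (Tverts t) σ}, (7:ℝ) ≤ σ := by
    rintro σ ⟨hσ1, hσsub⟩
    set xs : Fin 7 → ℝ := ![0, 1, 1, 1, 1, 1, 0] with hxs
    have hxscube : xs ∈ unitCube 7 := by
      intro i
      fin_cases i <;>
        simp [hxs, cv5, cv6, cv7, Matrix.vecHead, Matrix.vecTail] <;> norm_num
    obtain ⟨y, hy, hmap⟩ := hσsub hxscube
    have hco : ∀ i : Fin 7, 1/2 + σ * (y i - 1/2) = xs i := by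
      intro i
      have h := congrFun hmap i
      rw [hc] at h
      simpa [Pi.add_apply, Pi.smul_apply, Pi.sub_apply, smul_eq_mul] using h
    have h0 := hco 0; have h1 := hco 1; have h2 := hco 2; have h3 := hco 3
    have h4 := hco 4; have h5 := hco 5; have h6 := hco 6
    simp only [hxs] at h0 h1 h2 h3 h4 h5 h6
    simp [cv5, cv6, cv7, Matrix.vecHead, Matrix.vecTail] at h0 h1 h2 h3 h4 h5 h6
    have hLy := lag_nonneg t 0 y hy
    have hkey : σ * Lag t 0 y + (1 - σ)/8 = -(3/4) := by
      simp only [Lag, Matrix.cons_val_zero]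
      linear_combination ((4*t-1)/8)*h0 - ((4*t-1)/8)*h1 - ((4*t-1)/8)*h2 - h3
        + ((4*t-3)/8)*h4 + ((4*t-3)/8)*h5 + ((3-4*t)/8)*h6
    have hσLy : 0 ≤ σ * Lag t 0 y := mul_nonneg (by linarith) hLy
    linarith
  refine ⟨hai, hsub, ?_⟩
  exact le_antisymm (csInf_le ⟨1, fun σ hσ => hσ.1⟩ h7mem) (le_csInf ⟨7, h7mem⟩ hlb)
end
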